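/- arXiv:2207.07775 — 5 statements merged into one kernel-verified Lean document; each statement's English description precedes it below -/
import Mathlib

section
/- Fix k ≥ 4, a k-critical graph H_0 with h vertices, and a graph H obtained from H_0 by adding t−h pendant edges, where t ≥ (1000kh)^{10}·h^{10k}. Set λ = 1/(2·10^8·h^4·k^4) and d = (1+λ)n/(k−1). Let χ be a 2-coloring of E(K_n) with the minimum number of monochromatic labeled copies of H, and let V_{RB} be the set of vertices of K_n whose red degree and blue degree under χ are both at least d. Then for all sufficiently large n, |V_{RB}| ≤ λn. -/
open Filter

/-- Labeled copies of `F` in coloring `χ` with all edges of color `col`, image in `S`. -/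
noncomputable def colorCopiesIn {α : Type*} [Fintype α] (F : SimpleGraph α)
    {n c : ℕ} (χ : Sym2 (Fin n) → Fin c) (col : Fin c) (S : Set (Fin n)) : ℕ :=
  Set.ncard {f : α → Fin n | Function.Injective f ∧ (∀ v, f v ∈ S) ∧
    ∀ v w, F.Adj v w → χ s(f v, f w) = col}

noncomputable def colorCopies {α : Type*} [Fintype α] (F : SimpleGraph α)
    {n c : ℕ} (χ : Sym2 (Fin n) → Fin c) (col : Fin c) : ℕ :=
  colorCopiesIn F χ col Set.univ

/-- Monochromatic labeled copies of `F` in `χ`. -/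
noncomputable def monoCopies {α : Type*} [Fintype α] (F : SimpleGraph α)
    {n c : ℕ} (χ : Sym2 (Fin n) → Fin c) : ℕ :=
  Set.ncard {f : α → Fin n | Function.Injective f ∧
    ∃ col : Fin c, ∀ v w, F.Adj v w → χ s(f v, f w) = col}

/-- Minimum number of monochromatic labeled copies of `F` over all `c`-colorings of `E(K_n)`. -/
noncomputable def minMono {α : Type*} [Fintype α] (F : SimpleGraph α) (n c : ℕ) : ℕ :=
  ⨅ χ : Sym2 (Fin n) → Fin c, monoCopies F χ

/-- Degree of `v` in color `col`. -/
noncomputable def colorDeg {n c : ℕ} (χ : Sym2 (Fin n) → Fin c) (col : Fin c) (v : Fin n) : ℕ :=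
  Set.ncard {w : Fin n | w ≠ v ∧ χ s(v, w) = col}

/-- `H` is `k`-critical. -/
def IsKCritical {α : Type*} (H : SimpleGraph α) (k : ℕ) : Prop :=
  H.chromaticNumber = (k : ℕ∞) ∧
    ∃ e ∈ H.edgeSet, (H.deleteEdges {e}).chromaticNumber = ((k - 1 : ℕ) : ℕ∞)

/-- Every vertex outside `s` is a pendant vertex whose unique neighbor lies in `s`. -/
def PendantOutside {α : Type*} (H : SimpleGraph α) (s : Finset α) : Prop :=
  ∀ v ∉ s, ∃ w ∈ s, H.neighborSet v = {w}

/-- The Turán coloring of `E(K_n)` with `k-1` parts: edges within parts red (`0`),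
edges between parts blue (`1`). -/
def turanColoring (n k : ℕ) : Sym2 (Fin n) → Fin 2 :=
  Sym2.lift ⟨fun i j => if i.val % (k - 1) = j.val % (k - 1) then 0 else 1,
    fun i j => by
      dsimp only
      by_cases h : i.val % (k - 1) = j.val % (k - 1)
      · rw [if_pos h, if_pos h.symm]
      · rw [if_neg h, if_neg fun h' => h h'.symm]⟩

/-- The parameter `λ = 1/(2·10^8·h^4·k^4)`. -/
noncomputable def lamParam (h k : ℕ) : ℝ := 1 / (2 * 10 ^ 8 * (h : ℝ) ^ 4 * (k : ℝ) ^ 4)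


section AuxTuran
open Finset

lemma turanColoring_eq_one {n k : ℕ} {a b : Fin n}
    (h : turanColoring n k s(a, b) = 1) : a.val % (k - 1) ≠ b.val % (k - 1) := by
  intro hab
  rw [turanColoring, Sym2.lift_mk] at h
  simp only [hab, if_pos] at h
  exact absurd h (by decide)

lemma turanColoring_eq_zero {n k : ℕ} {a b : Fin n}
    (h : turanColoring n k s(a, b) = 0) : a.val % (k - 1) = b.val % (k - 1) := by
  by_contra hab
  rw [turanColoring, Sym2.lift_mk] at h
  simp only [if_neg hab] at h
  exact absurd h (by decide)

lemma turan_no_blue {k t : ℕ} (hk : 4 ≤ k) (H : SimpleGraph (Fin t)) (s : Finset (Fin t))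
    (hchrom : (H.induce (↑s : Set (Fin t))).chromaticNumber = (k : ℕ∞)) {n : ℕ}
    (f : Fin t → Fin n)
    (hf : ∀ v w, H.Adj v w → turanColoring n k s(f v, f w) = 1) : False := by
  have hkpos : 0 < k - 1 := by omega
  have C : (H.induce (↑s : Set (Fin t))).Coloring (Fin (k - 1)) := by
    refine SimpleGraph.Coloring.mk (fun x => ⟨(f x.1).val % (k - 1), Nat.mod_lt _ hkpos⟩) ?_
    intro x y hadj
    have hH : H.Adj x.1 y.1 := by
      simpa using hadj
    have := turanColoring_eq_one (hf _ _ hH)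
    simp only [ne_eq, Fin.mk.injEq]
    exact this
  have hcol : (H.induce (↑s : Set (Fin t))).Colorable (k - 1) := by
    have := C.colorable
    simpa using this
  have hle := hcol.chromaticNumber_le
  rw [hchrom] at hle
  have : k ≤ k - 1 := by exact_mod_cast hle
  omega

lemma red_count (n m t : ℕ) (hm : 0 < m) (s : Finset (Fin t)) (wv : Fin t → Fin t)
    [DecidablePred (fun f : Fin t → Fin n => ∀ v ∉ s, (f v).val % m = (f (wv v)).val % m)]
    (hwv : ∀ v ∉ s, wv v ∈ s) :
    (univ.filter (fun f : Fin t → Fin n => ∀ v ∉ s, (f v).val % m = (f (wv v)).val % m)).card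
      ≤ n ^ s.card * (n / m + 1) ^ (t - s.card) := by
  classical
  rcases Nat.eq_zero_or_pos n with rfl | hn
  · -- no functions into Fin 0 unless t = 0; bound trivial
    rcases Nat.eq_zero_or_pos t with rfl | ht
    · have hs : s = ∅ := Finset.eq_empty_of_isEmpty s
      subst hs
      rw [filter_true_of_mem (fun f _ => fun v _ => (Fin.elim0 v))]
      rw [card_univ]
      simp
    · have : (univ.filter (fun f : Fin t → Fin 0 => ∀ v ∉ s, (f v).val % m = (f (wv v)).val % m)) = ∅ := by
        apply eq_empty_of_forall_notMem
        intro f _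
        exact absurd (f ⟨0, ht⟩).2 (by omega)
      simp [this]
  have key : (univ.filter (fun f : Fin t → Fin n => ∀ v ∉ s, (f v).val % m = (f (wv v)).val % m)).card
      ≤ (univ : Finset ((↥s → Fin n) × (↥(sᶜ) → Fin (n / m + 1)))).card := by
    apply card_le_card_of_injOn
      (fun f => (fun x : ↥s => f x.1,
        fun v : ↥(sᶜ) => (⟨(f v.1).val / m, by
          rw [Nat.lt_succ_iff]
          exact Nat.div_le_div_right (Nat.le_of_lt_succ (Nat.lt_succ_of_lt (f v.1).2))⟩ : Fin (n / m + 1))))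
    · intro f _
      exact mem_univ _
    · intro f hf g hg heq
      rw [mem_coe, mem_filter] at hf hg
      rw [Prod.mk.injEq] at heq
      obtain ⟨h1, h2⟩ := heq
      funext u
      by_cases hu : u ∈ s
      · exact congrFun h1 ⟨u, hu⟩
      · have hu' : u ∈ sᶜ := mem_compl.2 hu
        have hdiv : (f u).val / m = (g u).val / m := by
          have := congrFun h2 ⟨u, hu'⟩
          simpa using this
        have hmod : (f u).val % m = (g u).val % m := by
          have hfs := hf.2 u hu
          have hgs := hg.2 u hu
          have hw : f (wv u) = g (wv u) := congrFun h1 ⟨wv u, hwv u hu⟩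
          rw [hfs, hgs, hw]
        apply Fin.ext
        calc (f u).val = m * ((f u).val / m) + (f u).val % m := (Nat.div_add_mod _ _).symm
          _ = m * ((g u).val / m) + (g u).val % m := by rw [hdiv, hmod]
          _ = (g u).val := Nat.div_add_mod _ _
  calc _ ≤ (univ : Finset ((↥s → Fin n) × (↥(sᶜ) → Fin (n / m + 1)))).card := key
    _ = n ^ s.card * (n / m + 1) ^ (t - s.card) := by
      rw [card_univ, Fintype.card_prod, Fintype.card_fun, Fintype.card_fun,
        Fintype.card_coe, Fintype.card_coe, Fintype.card_fin, Fintype.card_fin,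
        card_compl]
      simp

end AuxTuran

section AuxStatement8
open Finset

lemma ncard_setOf_eq_card_filter {α : Type*} [Fintype α] (P : α → Prop) [DecidablePred P] :
    Set.ncard {x | P x} = (Finset.univ.filter (fun x => P x)).card := by
  rw [Set.ncard_eq_toFinset_card']
  simp [Set.toFinset_setOf]

lemma mono_insert {n : ℕ} (χ : Sym2 (Fin n) → Fin 2) (c : Fin 2) (x : Fin n) (S : Finset (Fin n))
    (hedge : ∀ y ∈ S, χ s(x, y) = c)
    (hmono : ∀ u ∈ S, ∀ v ∈ S, u ≠ v → χ s(u, v) = c) :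
    ∀ u ∈ insert x S, ∀ v ∈ insert x S, u ≠ v → χ s(u, v) = c := by
  intro u hu v hv huv
  rcases Finset.mem_insert.1 hu with hu' | hu' <;> rcases Finset.mem_insert.1 hv with hv' | hv'
  · exact absurd (hu'.trans hv'.symm) huv
  · rw [hu']; exact hedge v hv'
  · rw [hv', Sym2.eq_swap]; exact hedge u hu'
  · exact hmono u hu' v hv' huv

lemma fin2_eq_one {c : Fin 2} (h : c ≠ 0) : c = 1 := by omega

lemma ramsey_aux {n : ℕ} (χ : Sym2 (Fin n) → Fin 2) :
    ∀ m a b (A : Finset (Fin n)), a + b ≤ m → 2 ^ (a + b) ≤ A.card →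
    ∃ S ⊆ A, (S.card = a ∧ ∀ x ∈ S, ∀ y ∈ S, x ≠ y → χ s(x, y) = 0) ∨
              (S.card = b ∧ ∀ x ∈ S, ∀ y ∈ S, x ≠ y → χ s(x, y) = 1) := by
  intro m
  induction m with
  | zero =>
    intro a b A hab _
    refine ⟨∅, empty_subset _, Or.inl ?_⟩
    simp at hab
    simp [hab.1]
  | succ m ih =>
    intro a b A hab hA
    classical
    rcases Nat.eq_zero_or_pos a with ha | ha
    · exact ⟨∅, empty_subset _, Or.inl (by simp [ha])⟩
    rcases Nat.eq_zero_or_pos b with hb | hb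
    · exact ⟨∅, empty_subset _, Or.inr (by simp [hb])⟩
    obtain ⟨a', rfl⟩ : ∃ a', a = a' + 1 := ⟨a - 1, by omega⟩
    obtain ⟨b', rfl⟩ : ∃ b', b = b' + 1 := ⟨b - 1, by omega⟩
    have hA0 : A.Nonempty := by
      rw [← card_pos]
      calc 0 < 2 ^ (a' + 1 + (b' + 1)) := Nat.pow_pos (by norm_num)
        _ ≤ A.card := hA
    obtain ⟨x, hx⟩ := hA0
    set A0 := (A.erase x).filter (fun y => χ s(x, y) = 0) with hA0def
    set A1 := (A.erase x).filter (fun y => χ s(x, y) ≠ 0) with hA1def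
    have hsplit : A0.card + A1.card = A.card - 1 := by
      rw [card_filter_add_card_filter_not, card_erase_of_mem hx]
    have hcases : 2 ^ (a' + (b' + 1)) ≤ A0.card ∨ 2 ^ (a' + 1 + b') ≤ A1.card := by
      by_contra hc
      push_neg at hc
      have h1 : 2 ^ (a' + 1 + (b' + 1)) = 2 ^ (a' + (b' + 1)) + 2 ^ (a' + 1 + b') := by
        ring
      omega
    rcases hcases with hbig | hbig
    · obtain ⟨S, hS, hcase⟩ := ih a' (b' + 1) A0 (by omega) hbig
      have hSA : S ⊆ A := hS.trans ((filter_subset _ _).trans (erase_subset _ _))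
      rcases hcase with ⟨hcard, hmono⟩ | ⟨hcard, hmono⟩
      · refine ⟨insert x S, insert_subset hx hSA, Or.inl ⟨?_, ?_⟩⟩
        · rw [card_insert_of_notMem, hcard]
          intro hxS
          exact (mem_erase.1 ((filter_subset _ _) (hS hxS))).1 rfl
        · exact mono_insert χ 0 x S (fun y hy => (mem_filter.1 (hS hy)).2) hmono
      · exact ⟨S, hSA, Or.inr ⟨hcard, hmono⟩⟩
    · obtain ⟨S, hS, hcase⟩ := ih (a' + 1) b' A1 (by omega) hbig
      have hSA : S ⊆ A := hS.trans ((filter_subset _ _).trans (erase_subset _ _))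
      rcases hcase with ⟨hcard, hmono⟩ | ⟨hcard, hmono⟩
      · exact ⟨S, hSA, Or.inl ⟨hcard, hmono⟩⟩
      · refine ⟨insert x S, insert_subset hx hSA, Or.inr ⟨?_, ?_⟩⟩
        · rw [card_insert_of_notMem, hcard]
          intro hxS
          exact (mem_erase.1 ((filter_subset _ _) (hS hxS))).1 rfl
        · exact mono_insert χ 1 x S (fun y hy => fin2_eq_one (mem_filter.1 (hS hy)).2) hmono

lemma ramsey_mono {n : ℕ} (χ : Sym2 (Fin n) → Fin 2) (h : ℕ) (A : Finset (Fin n))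
    (hA : 2 ^ (2 * h) ≤ A.card) :
    ∃ S ⊆ A, S.card = h ∧ ∃ c, ∀ x ∈ S, ∀ y ∈ S, x ≠ y → χ s(x, y) = c := by
  obtain ⟨S, hS, hcase⟩ := ramsey_aux χ (h + h) h h A le_rfl (by rwa [← two_mul])
  rcases hcase with ⟨hcard, hmono⟩ | ⟨hcard, hmono⟩
  · exact ⟨S, hS, hcard, 0, hmono⟩
  · exact ⟨S, hS, hcard, 1, hmono⟩

lemma supersat {n : ℕ} (χ : Sym2 (Fin n) → Fin 2) (h : ℕ) (W : Finset (Fin n))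
    [DecidablePred (fun S : Finset (Fin n) => ∃ c, ∀ x ∈ S, ∀ y ∈ S, x ≠ y → χ s(x, y) = c)]
    (hW : 2 ^ (2 * h) ≤ W.card) :
    W.card.choose h ≤ ((W.powersetCard h).filter
      (fun S => ∃ c, ∀ x ∈ S, ∀ y ∈ S, x ≠ y → χ s(x, y) = c)).card * ((2 ^ (2 * h)).choose h) := by
  classical
  set R := 2 ^ (2 * h) with hR
  set Monos := (W.powersetCard h).filter
      (fun S => ∃ c, ∀ x ∈ S, ∀ y ∈ S, x ≠ y → χ s(x, y) = c) with hMonos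
  have hhR : h ≤ R := by
    calc h ≤ 2 ^ h := Nat.le_of_lt Nat.lt_two_pow_self
      _ ≤ 2 ^ (2 * h) := Nat.pow_le_pow_right (by norm_num) (by omega)
  -- choice of mono subset in each R-subset
  have hchoice : ∀ A ∈ W.powersetCard R, ∃ S ∈ Monos, S ⊆ A := by
    intro A hA
    rw [mem_powersetCard] at hA
    obtain ⟨S, hSA, hScard, hSmono⟩ := ramsey_mono χ h A (le_of_eq hA.2.symm)
    exact ⟨S, mem_filter.2 ⟨mem_powersetCard.2 ⟨hSA.trans hA.1, hScard⟩, hSmono⟩, hSA⟩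
  choose φ hφmem hφsub using hchoice
  -- fibers of φ are small
  have key : (W.powersetCard R).card ≤ ((W.card - h).choose (R - h)) * Monos.card := by
    apply card_le_mul_card_image_of_maps_to (f := fun A => if hA : A ∈ W.powersetCard R then φ A hA else ∅)
      (fun A hA => by simp [hA, hφmem])
    intro S hSM
    have hSW : S ⊆ W ∧ S.card = h := mem_powersetCard.1 (filter_subset _ _ hSM)
    -- fiber ↪ powersetCard (R-h) (W \ S)
    have : ((W.powersetCard R).filter
        (fun A => (if hA : A ∈ W.powersetCard R then φ A hA else ∅) = S)).card
        ≤ ((W \ S).powersetCard (R - h)).card := by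
      apply card_le_card_of_injOn (fun A => A \ S)
      · intro A hA
        rw [mem_coe, mem_filter] at hA
        obtain ⟨hA1, hA2⟩ := hA
        rw [dif_pos hA1] at hA2
        have hSsub : S ⊆ A := hA2 ▸ hφsub A hA1
        have hScard : S.card = h := (mem_powersetCard.1 (filter_subset _ _ (hA2 ▸ hφmem A hA1))).2
        rw [mem_powersetCard] at hA1; rw [mem_coe, mem_powersetCard]
        constructor
        · exact sdiff_subset_sdiff hA1.1 (le_refl S)
        · rw [card_sdiff_of_subset hSsub, hA1.2, hScard]
      · intro A hA B hB hAB
        rw [mem_coe, mem_filter] at hA hB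
        obtain ⟨hA1, hA2⟩ := hA
        obtain ⟨hB1, hB2⟩ := hB
        rw [dif_pos hA1] at hA2
        rw [dif_pos hB1] at hB2
        have hSA : S ⊆ A := hA2 ▸ hφsub A hA1
        have hSB : S ⊆ B := hB2 ▸ hφsub B hB1
        have hd : A \ S = B \ S := hAB
        calc A = A \ S ∪ S := (sdiff_union_of_subset hSA).symm
          _ = B \ S ∪ S := by rw [hd]
          _ = B := sdiff_union_of_subset hSB
    calc ((W.powersetCard R).filter _).card ≤ ((W \ S).powersetCard (R - h)).card := this
      _ = (W \ S).card.choose (R - h) := card_powersetCard _ _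
      _ ≤ (W.card - h).choose (R - h) := by
          apply Nat.choose_le_choose
          rw [card_sdiff_of_subset hSW.1, hSW.2]
  rw [card_powersetCard] at key
  -- multiply by C(R,h) and use the subset-chain identity
  have hid : W.card.choose R * R.choose h = W.card.choose h * (W.card - h).choose (R - h) :=
    Nat.choose_mul hhR
  have hpos : 0 < (W.card - h).choose (R - h) :=
    Nat.choose_pos (by omega)
  have : W.card.choose h * (W.card - h).choose (R - h)
      ≤ (Monos.card * R.choose h) * (W.card - h).choose (R - h) := by
    calc W.card.choose h * (W.card - h).choose (R - h) = W.card.choose R * R.choose h := hid.symm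
      _ ≤ ((W.card - h).choose (R - h) * Monos.card) * R.choose h :=
          Nat.mul_le_mul_right _ key
      _ = (Monos.card * R.choose h) * (W.card - h).choose (R - h) := by ring
  exact Nat.le_of_mul_le_mul_right this hpos

section Ext
variable {n t : ℕ} (χ : Sym2 (Fin n) → Fin 2) (z₀ : Fin n) (s : Finset (Fin t))
  (wv : Fin t → Fin t) (x₀ y₀ : Fin t) (W : Finset (Fin n))

open Classical in
/-- Partial monochromatic embeddings, defined on `B ⊇ s`, default `z₀` outside. -/
noncomputable def Qset (B : Finset (Fin t)) : Finset (Fin t → Fin n) :=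
  univ.filter (fun f => Set.InjOn f ↑B ∧ (∀ v ∈ s, f v ∈ W) ∧
    (∀ x ∈ s, ∀ y ∈ s, x ≠ y → χ s(f x, f y) = χ s(f x₀, f y₀)) ∧
    (∀ v ∈ B, v ∉ s → χ s(f v, f (wv v)) = χ s(f x₀, f y₀)) ∧
    (∀ v ∉ B, f v = z₀))

lemma mem_Qset {B : Finset (Fin t)} {f : Fin t → Fin n} :
    f ∈ Qset χ z₀ s wv x₀ y₀ W B ↔ (Set.InjOn f ↑B ∧ (∀ v ∈ s, f v ∈ W) ∧
    (∀ x ∈ s, ∀ y ∈ s, x ≠ y → χ s(f x, f y) = χ s(f x₀, f y₀)) ∧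
    (∀ v ∈ B, v ∉ s → χ s(f v, f (wv v)) = χ s(f x₀, f y₀)) ∧
    (∀ v ∉ B, f v = z₀)) := by
  classical
  simp [Qset]

lemma Qset_insert (hwv : ∀ v ∉ s, wv v ∈ s) (hx₀ : x₀ ∈ s) (hy₀ : y₀ ∈ s)
    (D : ℕ) (hdeg : ∀ x ∈ W, ∀ c : Fin 2, D ≤ (univ.filter (fun y => y ≠ x ∧ χ s(x, y) = c)).card)
    (B : Finset (Fin t)) (hsB : s ⊆ B) (v : Fin t) (hv : v ∉ B) :
    (Qset χ z₀ s wv x₀ y₀ W B).card * (D - t) ≤ (Qset χ z₀ s wv x₀ y₀ W (insert v B)).card := by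
  classical
  have hvs : v ∉ s := fun hvs => hv (hsB hvs)
  -- the candidate set of values for `v`
  set Cf : (Fin t → Fin n) → Finset (Fin n) := fun f =>
    (univ.filter (fun y => y ≠ f (wv v) ∧ χ s(f (wv v), y) = χ s(f x₀, f y₀))) \ (B.image f)
    with hCfdef
  have hCf : ∀ f ∈ Qset χ z₀ s wv x₀ y₀ W B, D - t ≤ (Cf f).card := by
    intro f hf
    rw [mem_Qset] at hf
    obtain ⟨hinj, hW, hclique, hpend, hout⟩ := hf
    have h1 : D ≤ (univ.filter (fun y => y ≠ f (wv v) ∧ χ s(f (wv v), y) = χ s(f x₀, f y₀))).card :=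
      hdeg (f (wv v)) (hW _ (hwv v hvs)) _
    have h2 : (B.image f).card ≤ t := by
      calc (B.image f).card ≤ B.card := card_image_le
        _ ≤ (univ : Finset (Fin t)).card := card_le_univ _
        _ = t := by simp
    calc D - t ≤ (univ.filter (fun y => y ≠ f (wv v) ∧ χ s(f (wv v), y) = χ s(f x₀, f y₀))).card
          - (B.image f).card := by omega
      _ ≤ (Cf f).card := le_card_sdiff _ _
  -- choice of D - t fresh values for each f
  set e : (Fin t → Fin n) → Fin (D - t) → Fin n := fun f =>
    if hc : D - t ≤ (Cf f).card then (Cf f).orderEmbOfCardLe hc else fun _ => z₀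
    with hedef
  have he_eq : ∀ f (hf : f ∈ Qset χ z₀ s wv x₀ y₀ W B),
      e f = ⇑((Cf f).orderEmbOfCardLe (hCf f hf)) := by
    intro f hf
    simp only [hedef]
    rw [dif_pos (hCf f hf)]
  have he_mem : ∀ f ∈ Qset χ z₀ s wv x₀ y₀ W B, ∀ i, e f i ∈ Cf f := by
    intro f hf i
    rw [he_eq f hf]
    exact Finset.orderEmbOfCardLe_mem _ _ _
  have he_inj : ∀ f ∈ Qset χ z₀ s wv x₀ y₀ W B, Function.Injective (e f) := by
    intro f hf
    rw [he_eq f hf]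
    exact (Finset.orderEmbOfCardLe _ _).injective
  have key : ((Qset χ z₀ s wv x₀ y₀ W B) ×ˢ (univ : Finset (Fin (D - t)))).card
      ≤ (Qset χ z₀ s wv x₀ y₀ W (insert v B)).card := by
    apply card_le_card_of_injOn (fun p => Function.update p.1 v (e p.1 p.2))
    · rintro ⟨f, i⟩ hp
      rw [mem_coe, mem_product] at hp
      obtain ⟨hf, -⟩ := hp
      have hmem := he_mem f hf i
      rw [hCfdef] at hmem
      obtain ⟨hmem1, hynotim⟩ := mem_sdiff.1 hmem
      obtain ⟨-, hyne, hycol⟩ := mem_filter.1 hmem1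
      rw [mem_Qset] at hf
      obtain ⟨hinj, hWm, hclique, hpend, hout⟩ := hf
      have hupd : ∀ u, u ≠ v → Function.update f v (e f i) u = f u := fun u hu =>
        Function.update_of_ne hu _ _
      have hx₀v : x₀ ≠ v := fun h => hvs (h ▸ hx₀)
      have hy₀v : y₀ ≠ v := fun h => hvs (h ▸ hy₀)
      simp only [mem_coe]; rw [mem_Qset]
      refine ⟨?_, ?_, ?_, ?_, ?_⟩
      · -- InjOn on insert v B
        intro a ha b hb heq
        rw [coe_insert, Set.mem_insert_iff] at ha hb
        rcases ha with rfl | ha <;> rcases hb with rfl | hb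
        · rfl
        · exfalso
          rw [Function.update_self, hupd b (fun h => hv (h ▸ hb))] at heq
          exact hynotim (mem_image.2 ⟨b, hb, heq.symm⟩)
        · exfalso
          rw [Function.update_self, hupd a (fun h => hv (h ▸ ha))] at heq
          exact hynotim (mem_image.2 ⟨a, ha, heq⟩)
        · rw [hupd a (fun h => hv (h ▸ ha)), hupd b (fun h => hv (h ▸ hb))] at heq
          exact hinj ha hb heq
      · intro u hu
        rw [hupd u (fun h => hvs (h ▸ hu))]
        exact hWm u hu
      · intro x hx y hy hxy
        rw [hupd x (fun h => hvs (h ▸ hx)), hupd y (fun h => hvs (h ▸ hy)),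
          hupd x₀ hx₀v, hupd y₀ hy₀v]
        exact hclique x hx y hy hxy
      · intro u hu hus
        rw [hupd x₀ hx₀v, hupd y₀ hy₀v]
        rcases mem_insert.1 hu with rfl | hu'
        · rw [Function.update_self, hupd (wv u) (fun h => hvs (h ▸ hwv u hus))]
          rw [Sym2.eq_swap]
          exact hycol
        · rw [hupd u (fun h => hv (h ▸ hu')), hupd (wv u) (fun h => hvs (h ▸ hwv u hus))]
          exact hpend u hu' hus
      · intro u hu
        rw [mem_insert, not_or] at hu
        rw [hupd u hu.1]
        exact hout u hu.2
    · rintro ⟨f, i⟩ hp ⟨g, j⟩ hq heq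
      rw [mem_coe, mem_product] at hp hq
      obtain ⟨hf, -⟩ := hp
      obtain ⟨hg, -⟩ := hq
      have hfv : f v = z₀ := ((mem_Qset χ z₀ s wv x₀ y₀ W).1 hf).2.2.2.2 v hv
      have hgv : g v = z₀ := ((mem_Qset χ z₀ s wv x₀ y₀ W).1 hg).2.2.2.2 v hv
      have hfg : f = g := by
        funext u
        by_cases hu : u = v
        · rw [hu, hfv, hgv]
        · have := congrFun heq u
          dsimp only at this
          rwa [Function.update_of_ne hu, Function.update_of_ne hu] at this
      subst hfg
      have : e f i = e f j := by
        have := congrFun heq v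
        dsimp only at this
        rwa [Function.update_self, Function.update_self] at this
      exact Prod.ext rfl (he_inj f hf this)
  calc (Qset χ z₀ s wv x₀ y₀ W B).card * (D - t)
      = ((Qset χ z₀ s wv x₀ y₀ W B) ×ˢ (univ : Finset (Fin (D - t)))).card := by
        rw [card_product, card_univ, Fintype.card_fin]
    _ ≤ _ := key

lemma Qset_chain (hwv : ∀ v ∉ s, wv v ∈ s) (hx₀ : x₀ ∈ s) (hy₀ : y₀ ∈ s)
    (D : ℕ) (hdeg : ∀ x ∈ W, ∀ c : Fin 2, D ≤ (univ.filter (fun y => y ≠ x ∧ χ s(x, y) = c)).card)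
    (C : Finset (Fin t)) (hC : ∀ v ∈ C, v ∉ s) :
    (Qset χ z₀ s wv x₀ y₀ W s).card * (D - t) ^ C.card ≤ (Qset χ z₀ s wv x₀ y₀ W (s ∪ C)).card := by
  classical
  induction C using Finset.induction_on with
  | empty => simp
  | @insert a C ha ih =>
    have hC' : ∀ v ∈ C, v ∉ s := fun v hv => hC v (mem_insert_of_mem hv)
    have has : a ∉ s := hC a (mem_insert_self _ _)
    have hanotin : a ∉ s ∪ C := by
      rw [mem_union]
      rintro (h | h)
      exacts [has h, ha h]
    calc (Qset χ z₀ s wv x₀ y₀ W s).card * (D - t) ^ (insert a C).card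
        = (Qset χ z₀ s wv x₀ y₀ W s).card * (D - t) ^ C.card * (D - t) := by
          rw [card_insert_of_notMem ha, pow_succ, mul_assoc]
      _ ≤ (Qset χ z₀ s wv x₀ y₀ W (s ∪ C)).card * (D - t) :=
          Nat.mul_le_mul_right _ (ih hC')
      _ ≤ (Qset χ z₀ s wv x₀ y₀ W (insert a (s ∪ C))).card :=
          Qset_insert χ z₀ s wv x₀ y₀ W hwv hx₀ hy₀ D hdeg (s ∪ C) subset_union_left a hanotin
      _ = (Qset χ z₀ s wv x₀ y₀ W (s ∪ insert a C)).card := by rw [union_insert]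


end Ext

section Ext2
variable {n t : ℕ} (χ : Sym2 (Fin n) → Fin 2) (z₀ : Fin n) (s : Finset (Fin t))
  (wv : Fin t → Fin t) (x₀ y₀ : Fin t) (W : Finset (Fin n))

lemma base_count [DecidablePred (fun S : Finset (Fin n) => ∃ c, ∀ x ∈ S, ∀ y ∈ S, x ≠ y → χ s(x, y) = c)]
    (hx₀ : x₀ ∈ s) (hy₀ : y₀ ∈ s) (hx₀y₀ : x₀ ≠ y₀) :
    ((W.powersetCard s.card).filter
        (fun S => ∃ c, ∀ x ∈ S, ∀ y ∈ S, x ≠ y → χ s(x, y) = c)).card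
      ≤ (Qset χ z₀ s wv x₀ y₀ W s).card := by
  classical
  set g : Finset (Fin n) → (Fin t → Fin n) := fun S u =>
    if h1 : s.card ≤ S.card then
      (if hu : u ∈ s then S.orderEmbOfCardLe h1 ((s.orderIsoOfFin rfl).symm ⟨u, hu⟩) else z₀)
    else z₀ with hgdef
  have hgval : ∀ S (h1 : s.card ≤ S.card) u (hu : u ∈ s),
      g S u = S.orderEmbOfCardLe h1 ((s.orderIsoOfFin rfl).symm ⟨u, hu⟩) := by
    intro S h1 u hu
    simp only [hgdef]
    rw [dif_pos h1, dif_pos hu]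
  have hgz : ∀ S u, u ∉ s → g S u = z₀ := by
    intro S u hu
    simp only [hgdef]
    by_cases h1 : s.card ≤ S.card
    · rw [dif_pos h1, dif_neg hu]
    · rw [dif_neg h1]
  have hginjOn : ∀ S (h1 : s.card ≤ S.card), Set.InjOn (g S) ↑s := by
    intro S h1 a ha b hb heq
    rw [mem_coe] at ha hb
    rw [hgval S h1 a ha, hgval S h1 b hb] at heq
    have := (s.orderIsoOfFin rfl).symm.injective
      ((Finset.orderEmbOfCardLe S h1).injective heq)
    exact congrArg Subtype.val this
  have hgmem : ∀ S (h1 : s.card ≤ S.card) u (hu : u ∈ s), g S u ∈ S := by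
    intro S h1 u hu
    rw [hgval S h1 u hu]
    exact Finset.orderEmbOfCardLe_mem _ _ _
  apply card_le_card_of_injOn g
  · intro S hS
    rw [mem_coe, mem_filter, mem_powersetCard] at hS
    obtain ⟨⟨hSW, hScard⟩, c, hc⟩ := hS
    have h1 : s.card ≤ S.card := le_of_eq hScard.symm
    rw [mem_coe, mem_Qset]
    refine ⟨hginjOn S h1, ?_, ?_, ?_, fun u hu => hgz S u hu⟩
    · intro u hu
      exact hSW (hgmem S h1 u hu)
    · intro x hx y hy hxy
      have hne : g S x ≠ g S y := fun h => hxy (hginjOn S h1 (mem_coe.2 hx) (mem_coe.2 hy) h)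
      have hne0 : g S x₀ ≠ g S y₀ :=
        fun h => hx₀y₀ (hginjOn S h1 (mem_coe.2 hx₀) (mem_coe.2 hy₀) h)
      rw [hc _ (hgmem S h1 x hx) _ (hgmem S h1 y hy) hne,
        hc _ (hgmem S h1 x₀ hx₀) _ (hgmem S h1 y₀ hy₀) hne0]
    · intro v hv hv'
      exact absurd hv hv'
  · intro S hS T hT heq
    rw [mem_coe, mem_filter, mem_powersetCard] at hS hT
    have h1S : s.card ≤ S.card := le_of_eq hS.1.2.symm
    have h1T : s.card ≤ T.card := le_of_eq hT.1.2.symm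
    have himg : ∀ (U : Finset (Fin n)) (h1 : s.card ≤ U.card), U.card = s.card →
        U = s.image (g U) := by
      intro U h1 hcard
      apply (eq_of_subset_of_card_le ?_ ?_).symm
      · intro x hx
        rw [mem_image] at hx
        obtain ⟨u, hu, rfl⟩ := hx
        exact hgmem U h1 u hu
      · rw [card_image_of_injOn (hginjOn U h1), hcard]
    calc S = s.image (g S) := himg S h1S hS.1.2
      _ = s.image (g T) := by rw [heq]
      _ = T := (himg T h1T hT.1.2).symm

end Ext2

lemma numeric_ineq (h k t : ℕ) (hk : 4 ≤ k) (hkh : k ≤ h)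
    (ht : (1000 * k * h) ^ 10 * h ^ (10 * k) ≤ t) :
    ((h.factorial * ((2 ^ (2 * h)).choose h) : ℕ) : ℝ)
      < ((4 * 10 ^ 8 * h ^ 4 * k ^ 4 : ℕ) : ℝ)⁻¹ ^ h
        * (1 + ((4 * 10 ^ 8 * h ^ 4 * k ^ 4 : ℕ) : ℝ)⁻¹) ^ (t - h) := by
  have hh4 : 4 ≤ h := hk.trans hkh
  set Λn : ℕ := 4 * 10 ^ 8 * h ^ 4 * k ^ 4 with hΛn
  set Λ : ℝ := (Λn : ℝ) with hΛ
  have hΛ1 : (1 : ℝ) ≤ Λ := by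
    rw [hΛ]
    have : 1 ≤ Λn := Nat.one_le_iff_ne_zero.2 (by positivity)
    exact_mod_cast this
  have hΛ0 : (0 : ℝ) < Λ := lt_of_lt_of_le one_pos hΛ1
  set μ : ℝ := Λ⁻¹ with hμ
  have hμ0 : 0 < μ := inv_pos.2 hΛ0
  set q : ℕ := 4 * Λn ^ 2 with hq
  -- exponent bound
  have hexp : q * (h * h) + h ≤ t := by
    have e0 : 1 ≤ h ^ (10 * k) := Nat.one_le_pow _ _ (by omega)
    have e1 : (1000 * k * h) ^ 10 ≤ t := by
      calc (1000 * k * h) ^ 10 = (1000 * k * h) ^ 10 * 1 := by ring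
        _ ≤ (1000 * k * h) ^ 10 * h ^ (10 * k) := Nat.mul_le_mul_left _ e0
        _ ≤ t := ht
    have e2 : q * (h * h) = 64 * 10 ^ 16 * h ^ 10 * k ^ 8 := by
      rw [hq, hΛn]; ring
    have e3 : k ^ 8 ≤ k ^ 10 := Nat.pow_le_pow_right (by omega) (by omega)
    have e4 : h ≤ h ^ 10 * k ^ 10 :=
      le_trans (Nat.le_self_pow (by omega) h)
        (Nat.le_mul_of_pos_right _ (Nat.pow_pos (by omega)))
    have e5 : (1000 * k * h) ^ 10 = 10 ^ 30 * h ^ 10 * k ^ 10 := by ring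
    calc q * (h * h) + h ≤ 64 * 10 ^ 16 * h ^ 10 * k ^ 10 + h ^ 10 * k ^ 10 := by
          rw [e2]
          have : 64 * 10 ^ 16 * h ^ 10 * k ^ 8 ≤ 64 * 10 ^ 16 * h ^ 10 * k ^ 10 :=
            Nat.mul_le_mul_left _ e3
          omega
      _ = (64 * 10 ^ 16 + 1) * (h ^ 10 * k ^ 10) := by ring
      _ ≤ 10 ^ 30 * (h ^ 10 * k ^ 10) := Nat.mul_le_mul_right _ (by norm_num)
      _ = (1000 * k * h) ^ 10 := by rw [e5]; ring
      _ ≤ t := e1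
  -- the key exponential lower bound
  have hstep : ((4 : ℝ) * Λ) ^ (h * h) < (1 + μ) ^ (t - h) := by
    have s1 : (1 + μ) ^ q ≥ 1 + q * μ := by
      have := one_add_mul_le_pow (a := μ) (by linarith) q
      linarith [this]
    have s2 : (1 : ℝ) + q * μ > 4 * Λ := by
      have : (q : ℝ) = 4 * Λ ^ 2 := by rw [hq]; push_cast [hΛ]; ring
      rw [this, hμ]
      have : 4 * Λ ^ 2 * Λ⁻¹ = 4 * Λ := by
        field_simp
      rw [this]
      linarith
    have s3 : ((4 : ℝ) * Λ) ^ (h * h) < (1 + q * μ) ^ (h * h) := by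
      apply pow_lt_pow_left₀ s2 (by positivity)
      positivity
    have s4 : ((1 : ℝ) + q * μ) ^ (h * h) ≤ ((1 + μ) ^ q) ^ (h * h) := by
      apply pow_le_pow_left₀ (by positivity) s1
    have s5 : ((1 + μ) ^ q) ^ (h * h) = (1 + μ) ^ (q * (h * h)) := by
      rw [← pow_mul]
    have s6 : (1 + μ) ^ (q * (h * h)) ≤ (1 + μ) ^ (t - h) := by
      apply pow_le_pow_right₀ (by linarith)
      omega
    calc ((4 : ℝ) * Λ) ^ (h * h) < (1 + q * μ) ^ (h * h) := s3
      _ ≤ ((1 + μ) ^ q) ^ (h * h) := s4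
      _ = (1 + μ) ^ (q * (h * h)) := s5
      _ ≤ (1 + μ) ^ (t - h) := s6
  -- upper bound for the combinatorial constant
  have hconst : ((h.factorial * ((2 ^ (2 * h)).choose h) : ℕ) : ℝ) * Λ ^ h
      ≤ (4 * Λ) ^ (h * h) := by
    have c1 : (h.factorial * ((2 ^ (2 * h)).choose h) : ℕ) ≤ h ^ h * 4 ^ (h * h) := by
      apply Nat.mul_le_mul h.factorial_le_pow
      calc (2 ^ (2 * h)).choose h ≤ (2 ^ (2 * h)) ^ h := Nat.choose_le_pow _ _
        _ = 4 ^ (h * h) := by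
            rw [← pow_mul, show (4 : ℕ) = 2 ^ 2 by norm_num, ← pow_mul]
            ring_nf
    have c2 : (h : ℝ) ^ h * Λ ^ h ≤ Λ ^ (h * h) := by
      have hΛh : (h : ℝ) ≤ Λ := by
        rw [hΛ]
        have : h ≤ Λn := by
          rw [hΛn]
          calc h ≤ h ^ 4 := Nat.le_self_pow (by omega) h
            _ ≤ 4 * 10 ^ 8 * h ^ 4 * k ^ 4 := by
                have h1 : 1 ≤ 4 * 10 ^ 8 := by norm_num
                have h2 : 1 ≤ k ^ 4 := Nat.one_le_pow _ _ (by omega)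
                calc h ^ 4 = 1 * h ^ 4 * 1 := by ring
                  _ ≤ 4 * 10 ^ 8 * h ^ 4 * k ^ 4 :=
                    Nat.mul_le_mul (Nat.mul_le_mul h1 le_rfl) h2
        exact_mod_cast this
      have hhh : h + h ≤ h * h := by nlinarith
      calc (h : ℝ) ^ h * Λ ^ h ≤ Λ ^ h * Λ ^ h := by
            apply mul_le_mul_of_nonneg_right (pow_le_pow_left₀ (by positivity) hΛh h)
            positivity
        _ = Λ ^ (h + h) := by rw [pow_add]
        _ ≤ Λ ^ (h * h) := pow_le_pow_right₀ hΛ1 hhh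
    calc ((h.factorial * ((2 ^ (2 * h)).choose h) : ℕ) : ℝ) * Λ ^ h
        ≤ ((h ^ h * 4 ^ (h * h) : ℕ) : ℝ) * Λ ^ h := by
          apply mul_le_mul_of_nonneg_right _ (by positivity)
          exact_mod_cast c1
      _ = (h : ℝ) ^ h * Λ ^ h * 4 ^ (h * h) := by push_cast; ring
      _ ≤ Λ ^ (h * h) * 4 ^ (h * h) := by
          apply mul_le_mul_of_nonneg_right c2 (by positivity)
      _ = (4 * Λ) ^ (h * h) := by rw [mul_pow]; ring
  -- combine
  have hfin : ((h.factorial * ((2 ^ (2 * h)).choose h) : ℕ) : ℝ) * Λ ^ h < (1 + μ) ^ (t - h) :=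
    lt_of_le_of_lt hconst hstep
  have hΛpow : (0 : ℝ) < Λ ^ h := by positivity
  rw [hμ] at hfin
  rw [inv_pow, inv_mul_eq_div, lt_div_iff₀ hΛpow]
  exact hfin

end AuxStatement8

set_option maxHeartbeats 2000000 in
theorem statement8 (k h t : ℕ) (hk : 4 ≤ k)
    (H : SimpleGraph (Fin t)) (s : Finset (Fin t)) (hcard : s.card = h)
    (hcrit : IsKCritical (H.induce (s : Set (Fin t))) k)
    (hpend : PendantOutside H s)
    (ht : (1000 * k * h) ^ 10 * h ^ (10 * k) ≤ t) :
    ∃ N : ℕ, ∀ n ≥ N, ∀ χ : Sym2 (Fin n) → Fin 2, monoCopies H χ = minMono H n 2 →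
      (Set.ncard {v : Fin n |
          (1 + lamParam h k) * n / ((k : ℝ) - 1) ≤ (colorDeg χ 0 v : ℝ) ∧
          (1 + lamParam h k) * n / ((k : ℝ) - 1) ≤ (colorDeg χ 1 v : ℝ)} : ℝ) ≤
        lamParam h k * n := by
  classical
  -- basic consequences of criticality
  have hcardset : Fintype.card (↑s : Set (Fin t)) = h := by
    rw [← Set.toFinset_card, Finset.toFinset_coe, hcard]
  have hkh : k ≤ h := by
    have hle := (SimpleGraph.colorable_of_fintype
      (H.induce (↑s : Set (Fin t)))).chromaticNumber_le
    rw [hcrit.1, hcardset] at hle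
    exact_mod_cast hle
  have hh4 : 4 ≤ h := hk.trans hkh
  have hht : h ≤ t := by
    rw [← hcard]
    simpa using Finset.card_le_univ s
  obtain ⟨x₀, hx₀, y₀, hy₀, hxy⟩ := Finset.one_lt_card.1 (by omega : 1 < s.card)
  -- pendant structure
  have hpend' : ∀ v : Fin t, ∃ w, v ∉ s → w ∈ s ∧ H.neighborSet v = {w} := by
    intro v
    by_cases hv : v ∈ s
    · exact ⟨v, fun h => absurd hv h⟩
    · obtain ⟨w, hw1, hw2⟩ := hpend v hv
      exact ⟨w, fun _ => ⟨hw1, hw2⟩⟩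
  choose wv hwv using hpend'
  have hwvs : ∀ v ∉ s, wv v ∈ s := fun v hv => (hwv v hv).1
  have hwvadj : ∀ v ∉ s, H.Adj v (wv v) := by
    intro v hv
    have h2 := (hwv v hv).2
    have h3 : wv v ∈ H.neighborSet v := by rw [h2]; exact Set.mem_singleton _
    exact h3
  have hwvuniq : ∀ v ∉ s, ∀ w, H.Adj v w → w = wv v := by
    intro v hv w hadj
    have h2 := (hwv v hv).2
    have h3 : w ∈ H.neighborSet v := hadj
    rwa [h2, Set.mem_singleton_iff] at h3
  -- numeric setup
  set Λn : ℕ := 4 * 10 ^ 8 * h ^ 4 * k ^ 4 with hΛn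
  have hΛpos : (0 : ℝ) < (Λn : ℝ) := by
    have : 0 < Λn := by positivity
    exact_mod_cast this
  set μ : ℝ := ((Λn : ℕ) : ℝ)⁻¹ with hμ
  have hμ0 : 0 < μ := inv_pos.2 hΛpos
  have hμ1 : μ ≤ 1 := by
    rw [hμ]
    apply inv_le_one_of_one_le₀
    have : 1 ≤ Λn := Nat.one_le_iff_ne_zero.2 (by positivity)
    exact_mod_cast this
  have hlam2μ : lamParam h k = 2 * μ := by
    rw [lamParam, hμ, hΛn]
    have hh0 : ((h:ℝ)) ≠ 0 := by positivity
    have hk0 : ((k:ℝ)) ≠ 0 := by positivity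
    push_cast
    field_simp
    ring
  have hlam0 : 0 < lamParam h k := by rw [hlam2μ]; linarith
  have hk1 : (0 : ℝ) < (k : ℝ) - 1 := by
    have : (4 : ℝ) ≤ (k : ℝ) := by exact_mod_cast hk
    linarith
  -- choice of N
  refine ⟨max ⌈(2 * h + 4 ^ h : ℝ) / lamParam h k⌉₊
    ⌈((t : ℝ) + 2) * ((k : ℝ) - 1) / μ⌉₊ + 1, ?_⟩
  intro n hn χ hmin
  by_contra hcon
  push_neg at hcon
  -- conditions from n being large
  have hnN1 : (2 * h + 4 ^ h : ℝ) ≤ lamParam h k * n := by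
    have h1 : (⌈(2 * h + 4 ^ h : ℝ) / lamParam h k⌉₊ : ℝ) ≤ n := by
      have : ⌈(2 * h + 4 ^ h : ℝ) / lamParam h k⌉₊ ≤ n :=
        le_trans (le_trans (le_max_left _ _) (Nat.le_succ _)) hn
      exact_mod_cast this
    have h2 := (Nat.le_ceil ((2 * h + 4 ^ h : ℝ) / lamParam h k)).trans h1
    rw [div_le_iff₀ hlam0] at h2
    linarith
  have hnN2 : ((t : ℝ) + 2) * ((k : ℝ) - 1) ≤ μ * n := by
    have h1 : (⌈((t : ℝ) + 2) * ((k : ℝ) - 1) / μ⌉₊ : ℝ) ≤ n := by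
      have : ⌈((t : ℝ) + 2) * ((k : ℝ) - 1) / μ⌉₊ ≤ n :=
        le_trans (le_trans (le_max_right _ _) (Nat.le_succ _)) hn
      exact_mod_cast this
    have h2 := (Nat.le_ceil (((t : ℝ) + 2) * ((k : ℝ) - 1) / μ)).trans h1
    rw [div_le_iff₀ hμ0] at h2
    linarith
  have hn0 : 0 < n := by
    rcases Nat.eq_zero_or_pos n with rfl | hpos
    · exfalso
      have h4 : (0 : ℝ) < 4 ^ h := by positivity
      simp only [Nat.cast_zero, mul_zero] at hnN1
      have : (0 : ℝ) ≤ 2 * h := by positivity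
      linarith
    · exact hpos
  set z₀ : Fin n := ⟨0, hn0⟩ with hz₀
  -- the vertex set W
  have hcon' : lamParam h k * n < (((Finset.univ.filter (fun v : Fin n =>
      (1 + lamParam h k) * ↑n / ((k : ℝ) - 1) ≤ (colorDeg χ 0 v : ℝ) ∧
      (1 + lamParam h k) * ↑n / ((k : ℝ) - 1) ≤ (colorDeg χ 1 v : ℝ))).card : ℕ) : ℝ) := by
    rw [← ncard_setOf_eq_card_filter]
    exact hcon
  set W : Finset (Fin n) := Finset.univ.filter (fun v : Fin n =>
      (1 + lamParam h k) * ↑n / ((k : ℝ) - 1) ≤ (colorDeg χ 0 v : ℝ) ∧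
      (1 + lamParam h k) * ↑n / ((k : ℝ) - 1) ≤ (colorDeg χ 1 v : ℝ)) with hWdef
  -- the degree threshold
  set Dn : ℕ := ⌈(1 + lamParam h k) * ↑n / ((k : ℝ) - 1)⌉₊ with hDn
  have hdeg : ∀ x ∈ W, ∀ c : Fin 2,
      Dn ≤ (Finset.univ.filter (fun y => y ≠ x ∧ χ s(x, y) = c)).card := by
    intro x hx c
    rw [hWdef, Finset.mem_filter] at hx
    obtain ⟨-, hx0, hx1⟩ := hx
    have key : (1 + lamParam h k) * ↑n / ((k : ℝ) - 1) ≤ (colorDeg χ c x : ℝ) := by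
      fin_cases c
      · exact hx0
      · exact hx1
    have h1 : Dn ≤ colorDeg χ c x := by
      rw [hDn]
      exact Nat.ceil_le.2 key
    rwa [colorDeg, ncard_setOf_eq_card_filter] at h1
  -- cardinality facts for W
  have hwlam : lamParam h k * n < (W.card : ℝ) := hcon'
  have hWh : 2 * h ≤ W.card := by
    have h4 : (0 : ℝ) < 4 ^ h := by positivity
    have : (2 * h : ℝ) < (W.card : ℝ) := by linarith
    exact_mod_cast this.le
  have hW4h : 2 ^ (2 * h) ≤ W.card := by
    have h2h : (0 : ℝ) ≤ 2 * h := by positivity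
    have hlt : ((4 ^ h : ℕ) : ℝ) < (W.card : ℝ) := by push_cast; linarith
    have h4 : (4 : ℕ) ^ h ≤ W.card := by exact_mod_cast hlt.le
    calc 2 ^ (2 * h) = 4 ^ h := by rw [pow_mul]; norm_num
      _ ≤ W.card := h4
  -- supersaturation
  have hsup : W.card.choose h ≤ ((W.powersetCard h).filter
      (fun S => ∃ c, ∀ x ∈ S, ∀ y ∈ S, x ≠ y → χ s(x, y) = c)).card * ((2 ^ (2 * h)).choose h) :=
    supersat χ h W hW4h
  set Mono2 := (W.powersetCard h).filter
      (fun S => ∃ c, ∀ x ∈ S, ∀ y ∈ S, x ≠ y → χ s(x, y) = c) with hMono2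
  -- base count
  have hbase : Mono2.card ≤ (Qset χ z₀ s wv x₀ y₀ W s).card := by
    have := base_count χ z₀ s wv x₀ y₀ W hx₀ hy₀ hxy
    rwa [hcard] at this
  -- extension chain
  have hcompl : (sᶜ : Finset (Fin t)).card = t - h := by
    rw [Finset.card_compl, hcard]
    simp
  have hchain := Qset_chain χ z₀ s wv x₀ y₀ W hwvs hx₀ hy₀ Dn hdeg sᶜ
    (fun v hv => Finset.mem_compl.1 hv)
  rw [hcompl, Finset.union_compl] at hchain
  -- Q univ is contained in the monochromatic copies
  set M : Finset (Fin t → Fin n) := Finset.univ.filter (fun f => Function.Injective f ∧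
      ∃ col : Fin 2, ∀ v w, H.Adj v w → χ s(f v, f w) = col) with hM
  have hQM : (Qset χ z₀ s wv x₀ y₀ W Finset.univ).card ≤ M.card := by
    apply Finset.card_le_card
    intro f hf
    rw [mem_Qset] at hf
    obtain ⟨hinj, hWm, hclique, hpendc, hout⟩ := hf
    rw [hM, Finset.mem_filter]
    refine ⟨Finset.mem_univ _, ?_, χ s(f x₀, f y₀), ?_⟩
    · rw [Finset.coe_univ] at hinj
      exact Set.injOn_univ.1 hinj
    · intro v w hadj
      by_cases hv : v ∈ s
      · by_cases hw : w ∈ s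
        · exact hclique v hv w hw hadj.ne
        · have hveq : v = wv w := hwvuniq w hw v hadj.symm
          rw [Sym2.eq_swap, hveq]
          exact hpendc w (Finset.mem_univ _) hw
      · have hweq : w = wv v := hwvuniq v hv w hadj
        rw [hweq]
        exact hpendc v (Finset.mem_univ _) hv
  -- total number of monochromatic copies of the minimizer
  have hMcard : monoCopies H χ = M.card := by
    rw [hM]
    unfold monoCopies
    exact ncard_setOf_eq_card_filter _
  -- Turán coloring bound
  have hminle : minMono H n 2 ≤ monoCopies H (turanColoring n k) := by
    unfold minMono
    exact ciInf_le (OrderBot.bddBelow _) _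
  have hturan : monoCopies H (turanColoring n k) ≤ n ^ h * (n / (k - 1) + 1) ^ (t - h) := by
    unfold monoCopies
    rw [ncard_setOf_eq_card_filter]
    have hsub : (Finset.univ.filter (fun f : Fin t → Fin n => Function.Injective f ∧
        ∃ col : Fin 2, ∀ v w, H.Adj v w → turanColoring n k s(f v, f w) = col))
        ⊆ Finset.univ.filter (fun f : Fin t → Fin n =>
          ∀ v ∉ s, (f v).val % (k - 1) = (f (wv v)).val % (k - 1)) := by
      intro f hf
      rw [Finset.mem_filter] at hf ⊢
      obtain ⟨-, hinj, c, hc⟩ := hf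
      refine ⟨Finset.mem_univ _, ?_⟩
      intro v hv
      have hc01 : c = 0 ∨ c = 1 := by omega
      rcases hc01 with rfl | rfl
      · exact turanColoring_eq_zero (hc v (wv v) (hwvadj v hv))
      · exact (turan_no_blue hk H s hcrit.1 f hc).elim
    calc (Finset.univ.filter (fun f : Fin t → Fin n => Function.Injective f ∧
        ∃ col : Fin 2, ∀ v w, H.Adj v w → turanColoring n k s(f v, f w) = col)).card
        ≤ (Finset.univ.filter (fun f : Fin t → Fin n =>
          ∀ v ∉ s, (f v).val % (k - 1) = (f (wv v)).val % (k - 1))).card :=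
          Finset.card_le_card hsub
      _ ≤ n ^ s.card * (n / (k - 1) + 1) ^ (t - s.card) :=
          red_count n (k - 1) t (by omega) s wv hwvs
      _ = n ^ h * (n / (k - 1) + 1) ^ (t - h) := by rw [hcard]
  -- the natural number chain
  set p : ℕ := n / (k - 1) + 1 with hp
  have hA : Mono2.card * (Dn - t) ^ (t - h) ≤ n ^ h * p ^ (t - h) := by
    calc Mono2.card * (Dn - t) ^ (t - h)
        ≤ (Qset χ z₀ s wv x₀ y₀ W s).card * (Dn - t) ^ (t - h) :=
          Nat.mul_le_mul hbase le_rfl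
      _ ≤ (Qset χ z₀ s wv x₀ y₀ W Finset.univ).card := hchain
      _ ≤ M.card := hQM
      _ = monoCopies H χ := hMcard.symm
      _ = minMono H n 2 := hmin
      _ ≤ monoCopies H (turanColoring n k) := hminle
      _ ≤ n ^ h * p ^ (t - h) := hturan
  have hB : W.card.choose h * (Dn - t) ^ (t - h)
      ≤ ((2 ^ (2 * h)).choose h) * (n ^ h * p ^ (t - h)) := by
    have h1 : W.card.choose h * (Dn - t) ^ (t - h)
        ≤ (Mono2.card * ((2 ^ (2 * h)).choose h)) * (Dn - t) ^ (t - h) :=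
      Nat.mul_le_mul hsup le_rfl
    have h2 : (Mono2.card * ((2 ^ (2 * h)).choose h)) * (Dn - t) ^ (t - h)
        = ((2 ^ (2 * h)).choose h) * (Mono2.card * (Dn - t) ^ (t - h)) := by ring
    have h3 : ((2 ^ (2 * h)).choose h) * (Mono2.card * (Dn - t) ^ (t - h))
        ≤ ((2 ^ (2 * h)).choose h) * (n ^ h * p ^ (t - h)) :=
      Nat.mul_le_mul le_rfl hA
    exact le_trans (le_trans h1 (le_of_eq h2)) h3
  have hC : (W.card - h) ^ h * (Dn - t) ^ (t - h)
      ≤ (h.factorial * ((2 ^ (2 * h)).choose h)) * (n ^ h * p ^ (t - h)) := by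
    have h1 : (W.card - h) ^ h * (Dn - t) ^ (t - h)
        ≤ (W.card + 1 - h) ^ h * (Dn - t) ^ (t - h) :=
      Nat.mul_le_mul (Nat.pow_le_pow_left (by omega) _) le_rfl
    have h2 : (W.card + 1 - h) ^ h * (Dn - t) ^ (t - h)
        ≤ W.card.descFactorial h * (Dn - t) ^ (t - h) :=
      Nat.mul_le_mul (Nat.pow_sub_le_descFactorial _ _) le_rfl
    have h3 : W.card.descFactorial h * (Dn - t) ^ (t - h)
        = h.factorial * (W.card.choose h * (Dn - t) ^ (t - h)) := by
      rw [Nat.descFactorial_eq_factorial_mul_choose]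
      ring
    have h4 : h.factorial * (W.card.choose h * (Dn - t) ^ (t - h))
        ≤ h.factorial * (((2 ^ (2 * h)).choose h) * (n ^ h * p ^ (t - h))) :=
      Nat.mul_le_mul le_rfl hB
    have h5 : h.factorial * (((2 ^ (2 * h)).choose h) * (n ^ h * p ^ (t - h)))
        = (h.factorial * ((2 ^ (2 * h)).choose h)) * (n ^ h * p ^ (t - h)) := by ring
    exact le_trans (le_trans (le_trans h1 h2) (le_of_eq h3)) (le_trans h4 (le_of_eq h5))
  -- real-number analysis
  have hpn : (p : ℝ) ≤ (n : ℝ) / ((k : ℝ) - 1) + 1 := by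
    rw [hp]
    push_cast
    have hcd := Nat.cast_div_le (m := n) (n := k - 1) (α := ℝ)
    have hk1cast : ((k - 1 : ℕ) : ℝ) = (k : ℝ) - 1 := by
      have : 1 ≤ k := by omega
      push_cast [this]
      ring
    rw [hk1cast] at hcd
    linarith
  have hp1 : (1 : ℝ) ≤ (p : ℝ) := by
    rw [hp]
    push_cast
    have : (0:ℝ) ≤ ((n / (k-1) : ℕ) : ℝ) := Nat.cast_nonneg _
    linarith
  have hDreal : (1 + lamParam h k) * ↑n / ((k : ℝ) - 1) ≤ (Dn : ℝ) := Nat.le_ceil _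
  -- degree bound in real form
  have hμA : ((t : ℝ) + 2) ≤ μ * ((n : ℝ) / ((k : ℝ) - 1)) := by
    rw [mul_div_assoc'] at *
    rw [le_div_iff₀ hk1]
    linarith
  have hDnt : t + 2 ≤ Dn := by
    have hstep : ((t : ℝ) + 2) ≤ (Dn : ℝ) := by
      have h1 : μ * ((n : ℝ) / ((k : ℝ) - 1)) ≤ (1 + lamParam h k) * ↑n / ((k : ℝ) - 1) := by
        rw [mul_div_assoc]
        apply mul_le_mul_of_nonneg_right
        · linarith
        · positivity
      linarith
    exact_mod_cast hstep
  have hDtlow : (1 + μ) * ((n : ℝ) / ((k : ℝ) - 1) + 1) ≤ ((Dn - t : ℕ) : ℝ) := by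
    rw [Nat.cast_sub (by omega)]
    have hrw : (1 + lamParam h k) * ↑n / ((k : ℝ) - 1)
        = (1 + 2 * μ) * ((n : ℝ) / ((k : ℝ) - 1)) := by
      rw [hlam2μ, mul_div_assoc]
    rw [hrw] at hDreal
    nlinarith [hμA, hμ1, hDreal]
  have hwh : μ * n ≤ ((W.card - h : ℕ) : ℝ) := by
    rw [Nat.cast_sub (by omega)]
    have hlamn : lamParam h k * n = 2 * (μ * n) := by rw [hlam2μ]; ring
    have h4 : (0 : ℝ) ≤ 4 ^ h := by positivity
    rw [hlamn] at hwlam hnN1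
    linarith
  -- cast the chain to ℝ and divide
  have hmain : ((W.card - h : ℕ) : ℝ) ^ h * ((Dn - t : ℕ) : ℝ) ^ (t - h)
      ≤ ((h.factorial * ((2 ^ (2 * h)).choose h) : ℕ) : ℝ) * ((n : ℝ) ^ h * (p : ℝ) ^ (t - h)) := by
    exact_mod_cast hC
  have hlow : (μ * n) ^ h * ((1 + μ) * (p : ℝ)) ^ (t - h)
      ≤ ((W.card - h : ℕ) : ℝ) ^ h * ((Dn - t : ℕ) : ℝ) ^ (t - h) := by
    apply mul_le_mul
    · apply pow_le_pow_left₀ (by positivity) hwh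
    · apply pow_le_pow_left₀ (by positivity)
      calc (1 + μ) * (p : ℝ) ≤ (1 + μ) * ((n : ℝ) / ((k : ℝ) - 1) + 1) := by
            apply mul_le_mul_of_nonneg_left hpn (by linarith)
        _ ≤ ((Dn - t : ℕ) : ℝ) := hDtlow
    · positivity
    · positivity
  have hZ : (0 : ℝ) < (n : ℝ) ^ h * (p : ℝ) ^ (t - h) := by positivity
  have hdiv : μ ^ h * (1 + μ) ^ (t - h) ≤ ((h.factorial * ((2 ^ (2 * h)).choose h) : ℕ) : ℝ) := by
    have hfact : (μ * n) ^ h * ((1 + μ) * (p : ℝ)) ^ (t - h)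
        = (μ ^ h * (1 + μ) ^ (t - h)) * ((n : ℝ) ^ h * (p : ℝ) ^ (t - h)) := by
      rw [mul_pow, mul_pow]
      ring
    have := le_trans hlow hmain
    rw [hfact] at this
    exact le_of_mul_le_mul_right this hZ
  have hnum := numeric_ineq h k t hk hkh ht
  rw [← hΛn, ← hμ] at hnum
  linarith
end

section
/- Let k ≥ 2 and let ε > 0 satisfy √(2ε) ≤ 1/(k−1) − 1/k. Let G be a graph on n vertices with minimum degree at least (1 − 1/(k−1) − ε)n, and let V_1 ⊔ ⋯ ⊔ V_{k−1} be a partition of the vertex set of G such that the total number of edges of G inside the parts V_1, …, V_{k−1} is at most ε·n²/2. Then: (i) for each 1 ≤ i ≤ k−1, n/(k−1) − √(2ε)·n ≤ |V_i| ≤ n/(k−1) + √(2ε)·n; and (ii) for each 1 ≤ i ≠ j ≤ k−1, the number of edges of G between V_i and V_j is at least (1 − k²ε)·|V_i|·|V_j|. -/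
open Filter

set_option maxHeartbeats 1600000
set_option linter.unusedSectionVars false

section helpers
variable {V : Type*} [Fintype V] [DecidableEq V]

def resGraph (G : SimpleGraph V) (A B : Finset V) : SimpleGraph V where
  Adj v w := G.Adj v w ∧ ((v ∈ A ∧ w ∈ B) ∨ (v ∈ B ∧ w ∈ A))
  symm := ⟨by intro v w h; exact ⟨h.1.symm, h.2.elim (fun p => Or.inr ⟨p.2, p.1⟩) (fun p => Or.inl ⟨p.2, p.1⟩)⟩⟩
  loopless := ⟨fun v h => G.loopless.irrefl v h.1⟩

instance resGraphDec (G : SimpleGraph V) [DecidableRel G.Adj] (A B : Finset V) :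
    DecidableRel (resGraph G A B).Adj := fun v w =>
  inferInstanceAs (Decidable (G.Adj v w ∧ ((v ∈ A ∧ w ∈ B) ∨ (v ∈ B ∧ w ∈ A))))

lemma resGraph_edgeSet_internal (G : SimpleGraph V) (A : Finset V) :
    {e ∈ G.edgeSet | ∀ v ∈ e, v ∈ A} = (resGraph G A A).edgeSet := by
  ext e
  induction e using Sym2.ind with
  | _ x y =>
    simp only [Set.mem_setOf_eq, SimpleGraph.mem_edgeSet, Sym2.mem_iff, resGraph]
    constructor
    · rintro ⟨h, h2⟩
      exact ⟨h, Or.inl ⟨h2 x (Or.inl rfl), h2 y (Or.inr rfl)⟩⟩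
    · rintro ⟨h, (⟨hx, hy⟩ | ⟨hx, hy⟩)⟩ <;>
      · refine ⟨h, ?_⟩
        rintro v (rfl | rfl) <;> assumption

lemma resGraph_edgeSet_cross (G : SimpleGraph V) (A B : Finset V) :
    {e ∈ G.edgeSet | ∃ a ∈ A, ∃ b ∈ B, e = s(a, b)} = (resGraph G A B).edgeSet := by
  ext e
  induction e using Sym2.ind with
  | _ x y =>
    simp only [Set.mem_setOf_eq, SimpleGraph.mem_edgeSet, resGraph]
    constructor
    · rintro ⟨h, a, ha, b, hb, hab⟩
      rw [Sym2.eq_iff] at hab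
      rcases hab with ⟨rfl, rfl⟩ | ⟨rfl, rfl⟩
      · exact ⟨h, Or.inl ⟨ha, hb⟩⟩
      · exact ⟨h, Or.inr ⟨hb, ha⟩⟩
    · rintro ⟨h, (⟨hx, hy⟩ | ⟨hx, hy⟩)⟩
      · exact ⟨h, x, hx, y, hy, rfl⟩
      · exact ⟨h, y, hy, x, hx, (Sym2.eq_swap)⟩

lemma resGraph_degree_zero (G : SimpleGraph V) [DecidableRel G.Adj] (A B : Finset V)
    (v : V) (hvA : v ∉ A) (hvB : v ∉ B) : (resGraph G A B).degree v = 0 := by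
  rw [SimpleGraph.degree, Finset.card_eq_zero, Finset.eq_empty_iff_forall_notMem]
  intro w hw
  rw [SimpleGraph.mem_neighborFinset] at hw
  rcases hw.2 with ⟨h, _⟩ | ⟨h, _⟩ <;> [exact hvA h; exact hvB h]

lemma resGraph_degree_left (G : SimpleGraph V) [DecidableRel G.Adj] {A B : Finset V}
    {v : V} (hvA : v ∈ A) (hvB : v ∉ B) :
    (resGraph G A B).degree v = (B.filter (G.Adj v)).card := by
  rw [SimpleGraph.degree]
  congr 1
  ext w
  rw [SimpleGraph.mem_neighborFinset, Finset.mem_filter]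
  constructor
  · rintro ⟨h, (⟨_, hw⟩ | ⟨hv, _⟩)⟩
    · exact ⟨hw, h⟩
    · exact absurd hv hvB
  · rintro ⟨hw, h⟩
    exact ⟨h, Or.inl ⟨hvA, hw⟩⟩

lemma resGraph_degree_right (G : SimpleGraph V) [DecidableRel G.Adj] {A B : Finset V}
    {v : V} (hvB : v ∈ B) (hvA : v ∉ A) :
    (resGraph G A B).degree v = (A.filter (G.Adj v)).card := by
  rw [SimpleGraph.degree]
  congr 1
  ext w
  rw [SimpleGraph.mem_neighborFinset, Finset.mem_filter]
  constructor
  · rintro ⟨h, (⟨hv, _⟩ | ⟨_, hw⟩)⟩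
    · exact absurd hv hvA
    · exact ⟨hw, h⟩
  · rintro ⟨hw, h⟩
    exact ⟨h, Or.inr ⟨hvB, hw⟩⟩

lemma resGraph_degree_same (G : SimpleGraph V) [DecidableRel G.Adj] {A : Finset V}
    {v : V} (hvA : v ∈ A) :
    (resGraph G A A).degree v = (A.filter (G.Adj v)).card := by
  rw [SimpleGraph.degree]
  congr 1
  ext w
  rw [SimpleGraph.mem_neighborFinset, Finset.mem_filter]
  constructor
  · rintro ⟨h, (⟨_, hw⟩ | ⟨_, hw⟩)⟩ <;> exact ⟨hw, h⟩
  · rintro ⟨hw, h⟩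
    exact ⟨h, Or.inl ⟨hvA, hw⟩⟩

lemma internal_handshake (G : SimpleGraph V) [DecidableRel G.Adj] (A : Finset V) :
    ∑ v ∈ A, (A.filter (G.Adj v)).card = 2 * (resGraph G A A).edgeFinset.card := by
  rw [← SimpleGraph.sum_degrees_eq_twice_card_edges]
  rw [← Finset.sum_subset (Finset.subset_univ A)
    (fun v _ hv => resGraph_degree_zero G A A v hv hv)]
  exact Finset.sum_congr rfl fun v hv => (resGraph_degree_same G hv).symm

lemma cross_handshake (G : SimpleGraph V) [DecidableRel G.Adj] {A B : Finset V}
    (hAB : Disjoint A B) :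
    (∑ v ∈ A, (B.filter (G.Adj v)).card) + (∑ v ∈ B, (A.filter (G.Adj v)).card)
      = 2 * (resGraph G A B).edgeFinset.card := by
  rw [← SimpleGraph.sum_degrees_eq_twice_card_edges]
  rw [← Finset.sum_subset (Finset.subset_univ (A ∪ B))
    (fun v _ hv => resGraph_degree_zero G A B v
      (fun h => hv (Finset.mem_union_left _ h)) (fun h => hv (Finset.mem_union_right _ h)))]
  rw [Finset.sum_union hAB]
  congr 1
  · exact Finset.sum_congr rfl fun v hv =>
      (resGraph_degree_left G hv (Finset.disjoint_left.mp hAB hv)).symm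
  · exact Finset.sum_congr rfl fun v hv =>
      (resGraph_degree_right G hv (Finset.disjoint_right.mp hAB hv)).symm

lemma deg_le_two (G : SimpleGraph V) [DecidableRel G.Adj] (v : V) (A : Finset V) :
    G.degree v + A.card ≤ (A.filter (G.Adj v)).card + Fintype.card V := by
  have h1 : G.neighborFinset v ∩ A = A.filter (G.Adj v) := by
    ext w
    simp [SimpleGraph.mem_neighborFinset, Finset.mem_filter, and_comm]
  have h2 := Finset.card_inter_add_card_union (G.neighborFinset v) A
  have h3 : (G.neighborFinset v ∪ A).card ≤ Fintype.card V := by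
    rw [← Finset.card_univ]; exact Finset.card_le_card (Finset.subset_univ _)
  rw [h1] at h2
  rw [SimpleGraph.degree]
  omega

lemma deg_le_three (G : SimpleGraph V) [DecidableRel G.Adj] (v : V) {A B : Finset V}
    (hAB : Disjoint A B) :
    G.degree v + A.card + B.card ≤
      (A.filter (G.Adj v)).card + (B.filter (G.Adj v)).card + Fintype.card V := by
  have h1 : G.neighborFinset v ∩ (A ∪ B) = (A.filter (G.Adj v)) ∪ (B.filter (G.Adj v)) := by
    ext w
    simp only [Finset.mem_inter, Finset.mem_union, Finset.mem_filter,
      SimpleGraph.mem_neighborFinset]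
    tauto
  have h2 := Finset.card_inter_add_card_union (G.neighborFinset v) (A ∪ B)
  have h3 : (G.neighborFinset v ∪ (A ∪ B)).card ≤ Fintype.card V := by
    rw [← Finset.card_univ]; exact Finset.card_le_card (Finset.subset_univ _)
  have h4 : ((A.filter (G.Adj v)) ∪ (B.filter (G.Adj v))).card
      = (A.filter (G.Adj v)).card + (B.filter (G.Adj v)).card :=
    Finset.card_union_of_disjoint (Finset.disjoint_filter_filter hAB)
  have h5 : (A ∪ B).card = A.card + B.card := Finset.card_union_of_disjoint hAB
  rw [h1, h4] at h2
  rw [SimpleGraph.degree]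
  omega

end helpers

lemma quadpos (A B c u : ℝ) (hA : 0 ≤ A) (hc : 0 ≤ c) (hdisc : B^2 ≤ 4*A*c) :
    0 ≤ A*u^2 + B*u + c := by
  rcases eq_or_lt_of_le hA with h | h
  · have hB : B = 0 := by nlinarith
    simp [← h, hB]
    exact hc
  · nlinarith [sq_nonneg (2*A*u + B), mul_pos h h]

lemma keyineq (K q N a b ε : ℝ) (hK : 3 ≤ K) (hq : q = 1/(K-1)) (hε : 0 < ε)
    (h2ε : 2*ε ≤ (1/(K-1) - 1/K)^2) (hN : 0 ≤ N) (ha : 0 ≤ a) (hb : 0 ≤ b) :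
    2*ε*N^2 ≤ 2*K^2*ε*(a*b) + (a - q*N)^2 + (b - q*N)^2 := by
  have hK1 : (0:ℝ) < K - 1 := by linarith
  have hK0 : (0:ℝ) < K := by linarith
  have hqpos : 0 < q := by rw [hq]; positivity
  have hqK : q * (K - 1) = 1 := by rw [hq]; field_simp
  have hεe : 2*ε ≤ 1/((K-1)^2*K^2) := by
    have h0 : (1/(K-1) - 1/K)^2 = 1/((K-1)^2*K^2) := by field_simp; ring
    linarith [h0 ▸ h2ε]
  have h1 : 2*ε*(K-1)^2*K^2 ≤ 1 := by
    have h2 : 0 < (K-1)^2*K^2 := by positivity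
    calc 2*ε*(K-1)^2*K^2 = (2*ε)*((K-1)^2*K^2) := by ring
      _ ≤ (1/((K-1)^2*K^2)) * ((K-1)^2*K^2) := mul_le_mul_of_nonneg_right hεe (le_of_lt h2)
      _ = 1 := by field_simp
  have hεK2 : ε*K^2 ≤ 1/8 := by
    have hf : 0 ≤ ε*K^2*((K-1)^2 - 4) := by
      apply mul_nonneg (mul_nonneg hε.le (sq_nonneg K))
      nlinarith
    nlinarith
  have hεK4 : ε*K^4*q ≤ 9/16 := by
    have h3 : ε*K^4*q = ε*K^4/(K-1) := by rw [hq]; ring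
    rw [h3, div_le_iff₀ hK1]
    have h4 : 16*K^2 ≤ 18*(K-1)^3 := by nlinarith [sq_nonneg (K-3), mul_pos hK1 hK1]
    nlinarith [mul_pos (mul_pos hK1 hK1) hK1, mul_nonneg hε.le (sq_nonneg K),
      mul_nonneg (mul_nonneg hε.le (sq_nonneg K)) (sq_nonneg (K-1))]
  have hA : 0 ≤ 1 - ε*K^2 := by linarith
  have hc : 0 ≤ ε*q*N^2 + ε*q^2*N^2 := by positivity
  have hx : 0 ≤ ε*q*N^2 := by positivity
  have hdisc : (2*ε*K^2*q*N)^2 ≤ 4*(1 - ε*K^2)*(ε*q*N^2 + ε*q^2*N^2) := by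
    have h1' : (2*ε*K^2*q*N)^2 = 4*(ε*K^4*q)*(ε*q*N^2) := by ring
    have h2' : 4*(7/8)*(ε*q*N^2) ≤ 4*(1 - ε*K^2)*(ε*q*N^2 + ε*q^2*N^2) := by
      have hy : 0 ≤ ε*q^2*N^2 := by positivity
      nlinarith
    have h3' : 4*(ε*K^4*q)*(ε*q*N^2) ≤ 4*(9/16)*(ε*q*N^2) := by nlinarith
    linarith
  have hbu := quadpos (1-ε*K^2) (2*ε*K^2*q*N) (ε*q*N^2+ε*q^2*N^2) (a - q*N) hA hc hdisc
  have hbv := quadpos (1-ε*K^2) (2*ε*K^2*q*N) (ε*q*N^2+ε*q^2*N^2) (b - q*N) hA hc hdisc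
  have hsq : 0 ≤ ε*K^2*((a - q*N)+(b - q*N))^2 := by positivity
  have hconst : 0 ≤ 2*ε*q*N^2 := by positivity
  have hKq : K*q = 1 + q := by
    have h5 : K*q = q*(K-1) + q := by ring
    rw [h5, hqK]
  have hKq2' : 2*ε*N^2*(K^2*q^2) = 2*ε*N^2*((1+q)^2) := by
    have : K^2*q^2 = (1+q)^2 := by nlinarith [hKq]
    rw [this]
  linarith [hbu, hbv, hsq, hconst, hKq2']


theorem statement12 (k : ℕ) (hk : 2 ≤ k) (ε : ℝ) (hε : 0 < ε)
    (hεk : Real.sqrt (2 * ε) ≤ 1 / ((k : ℝ) - 1) - 1 / (k : ℝ))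
    (n : ℕ) (G : SimpleGraph (Fin n)) [DecidableRel G.Adj]
    (hmin : ∀ v : Fin n, (1 - 1 / ((k : ℝ) - 1) - ε) * n ≤ (G.degree v : ℝ))
    (P : Fin (k - 1) → Finset (Fin n))
    (hdisj : ∀ i j : Fin (k - 1), i ≠ j → Disjoint (P i) (P j))
    (hcover : ∀ v : Fin n, ∃ i, v ∈ P i)
    (hint : ((∑ i : Fin (k - 1),
        Set.ncard {e ∈ G.edgeSet | ∀ v ∈ e, v ∈ P i} : ℕ) : ℝ) ≤ ε * n ^ 2 / 2) :
    (∀ i : Fin (k - 1),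
      (n : ℝ) / ((k : ℝ) - 1) - Real.sqrt (2 * ε) * n ≤ ((P i).card : ℝ) ∧
      ((P i).card : ℝ) ≤ (n : ℝ) / ((k : ℝ) - 1) + Real.sqrt (2 * ε) * n) ∧
    ∀ i j : Fin (k - 1), i ≠ j →
      (1 - (k : ℝ) ^ 2 * ε) * ((P i).card : ℝ) * ((P j).card : ℝ) ≤
        (Set.ncard {e ∈ G.edgeSet | ∃ a ∈ P i, ∃ b ∈ P j, e = s(a, b)} : ℝ) := by
  classical
  have hK2 : (2:ℝ) ≤ (k:ℝ) := by exact_mod_cast hk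
  set K : ℝ := (k:ℝ) with hKdef
  have hK1 : (0:ℝ) < K - 1 := by linarith
  set q : ℝ := 1/(K-1) with hqdef
  set N : ℝ := (n:ℝ) with hNdef
  have hN0 : (0:ℝ) ≤ N := by rw [hNdef]; positivity
  have hqK : q*(K-1) = 1 := by rw [hqdef]; field_simp
  -- sum of part sizes
  have hcover' : Finset.univ.biUnion P = Finset.univ := by
    apply Finset.eq_univ_iff_forall.mpr
    intro v
    rcases hcover v with ⟨i, hi⟩
    exact Finset.mem_biUnion.mpr ⟨i, Finset.mem_univ i, hi⟩
  have hsumN : ∑ l, (P l).card = n := by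
    rw [← Finset.card_biUnion (fun i _ j _ hij => hdisj i j hij), hcover',
      Finset.card_univ, Fintype.card_fin]
  have hsum : ∑ l, ((P l).card : ℝ) = N := by
    show ∑ l, ((P l).card : ℝ) = ((n : ℕ) : ℝ)
    exact_mod_cast hsumN
  -- internal edge counts
  have hEeq : ∀ l, Set.ncard {e ∈ G.edgeSet | ∀ v ∈ e, v ∈ P l}
      = (resGraph G (P l) (P l)).edgeFinset.card := by
    intro l
    rw [resGraph_edgeSet_internal, ← SimpleGraph.coe_edgeFinset, Set.ncard_coe_finset]
  have hTot : ∑ l, 2*(((resGraph G (P l) (P l)).edgeFinset.card : ℝ)) ≤ ε*N^2 := by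
    rw [Finset.sum_congr rfl fun l _ => hEeq l] at hint
    push_cast at hint
    have h2 : ∑ l, 2*(((resGraph G (P l) (P l)).edgeFinset.card : ℝ))
        = 2 * ∑ l, (((resGraph G (P l) (P l)).edgeFinset.card : ℝ)) := by
      rw [Finset.mul_sum]
    rw [h2]
    linarith
  -- minimum degree sums
  have hmin' : ∀ l, (1 - q - ε)*N*((P l).card:ℝ) ≤ ∑ v ∈ P l, (G.degree v : ℝ) := by
    intro l
    calc (1 - q - ε)*N*((P l).card:ℝ) = ∑ _v ∈ P l, ((1 - q - ε)*N) := by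
          rw [Finset.sum_const, nsmul_eq_mul]; ring
      _ ≤ ∑ v ∈ P l, (G.degree v : ℝ) := Finset.sum_le_sum fun v _ => hmin v
  -- per-part inequality over ℕ then ℝ
  have hBnat : ∀ l, (∑ v ∈ P l, G.degree v) + (P l).card * (P l).card
      ≤ 2*((resGraph G (P l) (P l)).edgeFinset.card) + (P l).card * n := by
    intro l
    calc (∑ v ∈ P l, G.degree v) + (P l).card * (P l).card
        = ∑ v ∈ P l, (G.degree v + (P l).card) := by
          rw [Finset.sum_add_distrib, Finset.sum_const, smul_eq_mul]
      _ ≤ ∑ v ∈ P l, (((P l).filter (G.Adj v)).card + Fintype.card (Fin n)) :=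
          Finset.sum_le_sum fun v _ => deg_le_two G v (P l)
      _ = 2*((resGraph G (P l) (P l)).edgeFinset.card) + (P l).card * n := by
          rw [Finset.sum_add_distrib, Finset.sum_const, smul_eq_mul,
            internal_handshake, Fintype.card_fin]
  have hBR : ∀ l, (1 - q - ε)*N*((P l).card:ℝ) + ((P l).card:ℝ)^2
      ≤ 2*(((resGraph G (P l) (P l)).edgeFinset.card):ℝ) + ((P l).card:ℝ)*N := by
    intro l
    have h1 := hBnat l
    have h2 : ((∑ v ∈ P l, G.degree v : ℕ):ℝ) + ((P l).card:ℝ)*((P l).card:ℝ)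
        ≤ 2*(((resGraph G (P l) (P l)).edgeFinset.card):ℝ) + ((P l).card:ℝ)*N := by
      rw [hNdef]
      exact_mod_cast h1
    have h3 : (∑ v ∈ P l, (G.degree v : ℝ)) = ((∑ v ∈ P l, G.degree v : ℕ):ℝ) := by
      push_cast; rfl
    nlinarith [hmin' l, h3 ▸ (hmin' l)]
  -- sum of squares bound
  have hsumsq : ∑ l, ((P l).card:ℝ)^2 ≤ (q + 2*ε)*N^2 := by
    have h1 := Finset.sum_le_sum fun l (_ : l ∈ Finset.univ) => hBR l
    rw [Finset.sum_add_distrib, Finset.sum_add_distrib, ← Finset.mul_sum, hsum,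
      ← Finset.sum_mul, hsum] at h1
    nlinarith [hTot]
  -- Σ (c - qN)² = Σ c² - qN²
  have hcardfin : ((Finset.univ : Finset (Fin (k-1))).card : ℝ) = K - 1 := by
    rw [Finset.card_univ, Fintype.card_fin, hKdef]
    have h1 : (1:ℕ) ≤ k := by omega
    rw [Nat.cast_sub h1, Nat.cast_one]
  have hexpS : ∑ l, (((P l).card:ℝ) - q*N)^2 = (∑ l, ((P l).card:ℝ)^2) - q*N^2 := by
    have h1 : ∀ l : Fin (k-1), (((P l).card:ℝ) - q*N)^2
        = ((P l).card:ℝ)^2 - (2*q*N)*((P l).card:ℝ) + (q*N)^2 := fun l => by ring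
    rw [Finset.sum_congr rfl fun l _ => h1 l, Finset.sum_add_distrib,
      Finset.sum_sub_distrib, ← Finset.mul_sum, hsum, Finset.sum_const, nsmul_eq_mul, hcardfin]
    linear_combination (q*N^2)*hqK
  have hSigma : ∑ l, (((P l).card:ℝ) - q*N)^2 ≤ 2*ε*N^2 := by
    rw [hexpS]; linarith
  have hgoal1 : ∀ l : Fin (k-1),
      N/(K-1) - Real.sqrt (2*ε) * N ≤ ((P l).card : ℝ) ∧
      ((P l).card : ℝ) ≤ N/(K-1) + Real.sqrt (2*ε) * N := by
    intro l
    have hterm : (((P l).card:ℝ) - q*N)^2 ≤ 2*ε*N^2 :=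
      le_trans (Finset.single_le_sum (f := fun l => (((P l).card:ℝ) - q*N)^2)
        (fun i _ => sq_nonneg _) (Finset.mem_univ l)) hSigma
    have hs2N : (Real.sqrt (2*ε))^2 * N^2 = 2*ε*N^2 := by
      rw [Real.sq_sqrt (by linarith : (0:ℝ) ≤ 2*ε)]
    have hs0 : (0:ℝ) ≤ Real.sqrt (2*ε) * N := mul_nonneg (Real.sqrt_nonneg _) hN0
    have hqN : q*N = N/(K-1) := by rw [hqdef]; ring
    rw [← hqN]
    constructor
    · nlinarith [hterm, hs2N, hs0]
    · nlinarith [hterm, hs2N, hs0]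
  refine ⟨hgoal1, ?_⟩
  -- part (ii)
  intro i j hij
  rcases lt_or_ge k 3 with hk3 | hk3
  · exact absurd (Fin.ext (show i.val = j.val by
      have h1 := i.isLt; have h2 := j.isLt; omega)) hij
  have hK3 : (3:ℝ) ≤ K := by rw [hKdef]; exact_mod_cast hk3
  have hd := hdisj i j hij
  have hXeq : Set.ncard {e ∈ G.edgeSet | ∃ a ∈ P i, ∃ b ∈ P j, e = s(a, b)}
      = (resGraph G (P i) (P j)).edgeFinset.card := by
    rw [resGraph_edgeSet_cross, ← SimpleGraph.coe_edgeFinset, Set.ncard_coe_finset]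
  rw [hXeq]
  -- notation
  have hcast : ∀ l, (∑ v ∈ P l, (G.degree v : ℝ)) = ((∑ v ∈ P l, G.degree v : ℕ):ℝ) := by
    intro l; push_cast; rfl
  -- side inequalities (ℕ)
  have hSi : (∑ v ∈ P i, G.degree v) + (P i).card*(P i).card + (P i).card*(P j).card
      ≤ 2*((resGraph G (P i) (P i)).edgeFinset.card)
        + (∑ v ∈ P i, ((P j).filter (G.Adj v)).card) + (P i).card * n := by
    calc (∑ v ∈ P i, G.degree v) + (P i).card*(P i).card + (P i).card*(P j).card
        = ∑ v ∈ P i, (G.degree v + (P i).card + (P j).card) := by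
          rw [Finset.sum_add_distrib, Finset.sum_add_distrib, Finset.sum_const,
            Finset.sum_const, smul_eq_mul, smul_eq_mul]
      _ ≤ ∑ v ∈ P i, (((P i).filter (G.Adj v)).card + ((P j).filter (G.Adj v)).card
            + Fintype.card (Fin n)) := Finset.sum_le_sum fun v _ => deg_le_three G v hd
      _ = _ := by
          rw [Finset.sum_add_distrib, Finset.sum_add_distrib, Finset.sum_const, smul_eq_mul,
            internal_handshake, Fintype.card_fin]
  have hSj : (∑ v ∈ P j, G.degree v) + (P j).card*(P j).card + (P j).card*(P i).card
      ≤ 2*((resGraph G (P j) (P j)).edgeFinset.card)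
        + (∑ v ∈ P j, ((P i).filter (G.Adj v)).card) + (P j).card * n := by
    calc (∑ v ∈ P j, G.degree v) + (P j).card*(P j).card + (P j).card*(P i).card
        = ∑ v ∈ P j, (G.degree v + (P j).card + (P i).card) := by
          rw [Finset.sum_add_distrib, Finset.sum_add_distrib, Finset.sum_const,
            Finset.sum_const, smul_eq_mul, smul_eq_mul]
      _ ≤ ∑ v ∈ P j, (((P j).filter (G.Adj v)).card + ((P i).filter (G.Adj v)).card
            + Fintype.card (Fin n)) := Finset.sum_le_sum fun v _ => deg_le_three G v hd.symm
      _ = _ := by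
          rw [Finset.sum_add_distrib, Finset.sum_add_distrib, Finset.sum_const, smul_eq_mul,
            internal_handshake, Fintype.card_fin]
  have hHS := cross_handshake G hd
  -- cast side inequalities to ℝ and combine
  have hSiR : ((∑ v ∈ P i, G.degree v : ℕ):ℝ) + ((P i).card:ℝ)*((P i).card:ℝ) + ((P i).card:ℝ)*((P j).card:ℝ)
      ≤ 2*(((resGraph G (P i) (P i)).edgeFinset.card):ℝ)
        + ((∑ v ∈ P i, ((P j).filter (G.Adj v)).card : ℕ):ℝ) + ((P i).card:ℝ)*N := by
    rw [hNdef]; exact_mod_cast hSi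
  have hSjR : ((∑ v ∈ P j, G.degree v : ℕ):ℝ) + ((P j).card:ℝ)*((P j).card:ℝ) + ((P j).card:ℝ)*((P i).card:ℝ)
      ≤ 2*(((resGraph G (P j) (P j)).edgeFinset.card):ℝ)
        + ((∑ v ∈ P j, ((P i).filter (G.Adj v)).card : ℕ):ℝ) + ((P j).card:ℝ)*N := by
    rw [hNdef]; exact_mod_cast hSj
  have hHSR : ((∑ v ∈ P i, ((P j).filter (G.Adj v)).card : ℕ):ℝ)
      + ((∑ v ∈ P j, ((P i).filter (G.Adj v)).card : ℕ):ℝ)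
      = 2*(((resGraph G (P i) (P j)).edgeFinset.card):ℝ) := by
    exact_mod_cast hHS
  -- Bound on 2Ei + 2Ej via total internal budget
  have hsub : ({i,j} : Finset (Fin (k-1))) ⊆ Finset.univ := Finset.subset_univ _
  have hEE : 2*(((resGraph G (P i) (P i)).edgeFinset.card):ℝ)
      + 2*(((resGraph G (P j) (P j)).edgeFinset.card):ℝ)
      ≤ ε*N^2 - (∑ l, ((1 - q - ε)*N*((P l).card:ℝ) + ((P l).card:ℝ)^2 - ((P l).card:ℝ)*N))
        + ((1 - q - ε)*N*((P i).card:ℝ) + ((P i).card:ℝ)^2 - ((P i).card:ℝ)*N)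
        + ((1 - q - ε)*N*((P j).card:ℝ) + ((P j).card:ℝ)^2 - ((P j).card:ℝ)*N) := by
    have h1 : ∑ l ∈ Finset.univ \ {i,j},
        ((1 - q - ε)*N*((P l).card:ℝ) + ((P l).card:ℝ)^2 - ((P l).card:ℝ)*N)
        ≤ ∑ l ∈ Finset.univ \ {i,j}, 2*(((resGraph G (P l) (P l)).edgeFinset.card):ℝ) :=
      Finset.sum_le_sum fun l _ => by linarith [hBR l]
    rw [Finset.sum_sdiff_eq_sub hsub, Finset.sum_sdiff_eq_sub hsub,
      Finset.sum_pair hij, Finset.sum_pair hij] at h1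
    linarith [hTot, h1]
  have hgtot : ∑ l, ((1 - q - ε)*N*((P l).card:ℝ) + ((P l).card:ℝ)^2 - ((P l).card:ℝ)*N)
      = (1 - q - ε)*N*N + (∑ l, ((P l).card:ℝ)^2) - N*N := by
    rw [Finset.sum_sub_distrib, Finset.sum_add_distrib, ← Finset.mul_sum, hsum,
      ← Finset.sum_mul, hsum]
  have hpairSigma : (((P i).card:ℝ) - q*N)^2 + (((P j).card:ℝ) - q*N)^2
      ≤ ∑ l, (((P l).card:ℝ) - q*N)^2 := by
    have h1 := Finset.sum_le_sum_of_subset_of_nonneg hsub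
      (fun l _ _ => sq_nonneg ((((P l).card:ℝ) - q*N)))
    rwa [Finset.sum_pair hij] at h1
  -- main cross lower bound
  have h2X : 2*((P i).card:ℝ)*((P j).card:ℝ) - 2*ε*N^2
      + ((((P i).card:ℝ) - q*N)^2 + (((P j).card:ℝ) - q*N)^2)
      ≤ 2*(((resGraph G (P i) (P j)).edgeFinset.card):ℝ) := by
    have hmi := hmin' i
    have hmj := hmin' j
    rw [hcast i] at hmi
    rw [hcast j] at hmj
    linarith [hSiR, hSjR, hHSR, hEE, hgtot, hexpS, hpairSigma, hmi, hmj]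
  -- final arithmetic
  have h2ε : 2*ε ≤ (1/(K-1) - 1/K)^2 := by
    nlinarith [hεk, Real.sqrt_nonneg (2*ε), Real.sq_sqrt (by linarith : (0:ℝ) ≤ 2*ε)]
  have hkey := keyineq K q N ((P i).card:ℝ) ((P j).card:ℝ) ε hK3 hqdef hε h2ε hN0
    (Nat.cast_nonneg _) (Nat.cast_nonneg _)
  linarith [h2X, hkey]
end

section
/- Let q ≥ 2, and let H be a connected graph with t vertices whose clique number is k. Then for every n ≥ t, m_q(H,n) ≤ (r_{q−1}(k)−1)^{1−t}·(n)_t, and consequently c_q(H) ≤ (r_{q−1}(k)−1)^{1−t}. -/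
open Filter

/-- The `q`-color Ramsey number of `K_k`: the least `N` such that every `q`-coloring
of `E(K_N)` contains a monochromatic `K_k`. -/
noncomputable def ramseyMulti (q k : ℕ) : ℕ :=
  sInf {N | ∀ χ : Sym2 (Fin N) → Fin q, ∃ col : Fin q, ∃ A : Finset (Fin N),
    A.card = k ∧ ∀ i ∈ A, ∀ j ∈ A, i ≠ j → χ s(i, j) = col}



/-- Tower function for the greedy Ramsey argument. -/
def gseq (c : ℕ) : ℕ → ℕ
  | 0 => 0
  | m + 1 => c * gseq c m + 1

lemma buildSeq {c N : ℕ} (hc : 0 < c) (χ : Sym2 (Fin N) → Fin c) :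
    ∀ m (S : Finset (Fin N)), gseq c m ≤ S.card →
      ∃ (l : List (Fin N)) (col : Fin N → Fin c), l.length = m ∧ (∀ x ∈ l, x ∈ S) ∧
        l.Pairwise (fun a b => a ≠ b ∧ χ s(a, b) = col a) := by
  intro m
  induction m with
  | zero => exact fun S _ => ⟨[], fun _ => ⟨0, hc⟩, rfl, by simp, by simp⟩
  | succ m ih =>
    intro S hS
    have hpos : 0 < S.card := lt_of_lt_of_le (Nat.succ_pos _) hS
    obtain ⟨v, hv⟩ := Finset.card_pos.mp hpos
    have hcard : c * gseq c m ≤ (S.erase v).card := by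
      rw [Finset.card_erase_of_mem hv]
      have := hS
      simp only [gseq] at this
      omega
    have hmaps : ∀ a ∈ S.erase v, (fun w => χ s(v, w)) a ∈ (Finset.univ : Finset (Fin c)) :=
      fun _ _ => Finset.mem_univ _
    obtain ⟨cl, _, hcl⟩ := Finset.exists_le_card_fiber_of_mul_le_card_of_maps_to hmaps
      ⟨⟨0, hc⟩, Finset.mem_univ _⟩ (by simpa using hcard)
    obtain ⟨l, col, hlen, hmem, hpw⟩ := ih _ hcl
    refine ⟨v :: l, Function.update col v cl, by simp [hlen], ?_, ?_⟩
    · intro x hx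
      rcases List.mem_cons.mp hx with h | h
      · exact h ▸ hv
      · exact Finset.mem_of_mem_erase (Finset.mem_filter.mp (hmem x h)).1
    · refine List.Pairwise.cons ?_ (hpw.imp_of_mem ?_)
      · intro b hb
        have hbT := Finset.mem_filter.mp (hmem b hb)
        refine ⟨fun h => (Finset.mem_erase.mp hbT.1).1 h.symm, ?_⟩
        rw [Function.update_self]
        exact hbT.2
      · intro a b ha _ hab
        have haT := Finset.mem_filter.mp (hmem a ha)
        have : a ≠ v := (Finset.mem_erase.mp haT.1).1
        rwa [Function.update_of_ne this]

lemma ramsey_nonempty (c k : ℕ) (hc : 0 < c) :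
    ∃ N : ℕ, ∀ χ : Sym2 (Fin N) → Fin c, ∃ col : Fin c, ∃ A : Finset (Fin N),
      A.card = k ∧ ∀ i ∈ A, ∀ j ∈ A, i ≠ j → χ s(i, j) = col := by
  classical
  set m := c * (k - 1) + 1 with hm
  refine ⟨gseq c m, fun χ => ?_⟩
  obtain ⟨l, col, hlen, _, hpw⟩ := buildSeq hc χ m Finset.univ (by simp)
  have hnd : l.Nodup := hpw.imp fun h => h.1
  have hcardl : l.toFinset.card = m := by rw [List.toFinset_card_of_nodup hnd, hlen]
  have hmlt : (Finset.univ : Finset (Fin c)).card * (k - 1) < l.toFinset.card := by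
    simpa using (by omega : c * (k - 1) < l.toFinset.card)
  obtain ⟨cl, _, hcl⟩ := Finset.exists_lt_card_fiber_of_mul_lt_card_of_maps_to
    (f := col) (t := Finset.univ) (fun _ _ => Finset.mem_univ _) hmlt
  have hk : k ≤ (l.toFinset.filter (fun x => col x = cl)).card := by
    rcases Nat.eq_zero_or_pos k with h0 | h0
    · simp [h0]
    · omega
  obtain ⟨A, hAsub, hAcard⟩ := Finset.exists_subset_card_eq hk
  refine ⟨cl, A, hAcard, ?_⟩
  have hsymm : Symmetric (fun a b : Fin (gseq c m) => χ s(a, b) = col a ∨ χ s(a, b) = col b) := by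
    intro a b h
    rw [Sym2.eq_swap]
    exact h.symm
  haveI : Std.Symm (fun a b : Fin (gseq c m) => χ s(a, b) = col a ∨ χ s(a, b) = col b) :=
    ⟨fun a b h => hsymm h⟩
  have hforall := (hpw.imp (S := fun a b : Fin (gseq c m) => χ s(a, b) = col a ∨ χ s(a, b) = col b)
    (fun h => Or.inl h.2)).forall
  intro i hi j hj hij
  have hi' := Finset.mem_filter.mp (hAsub hi)
  have hj' := Finset.mem_filter.mp (hAsub hj)
  have hil : i ∈ l := List.mem_toFinset.mp hi'.1
  have hjl : j ∈ l := List.mem_toFinset.mp hj'.1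
  rcases hforall hil hjl hij with h | h
  · rw [h, hi'.2]
  · rw [h, hj'.2]


lemma descIneq (s n : ℕ) (hs : 1 ≤ s) (m : ℕ → ℕ)
    (hm : ∀ b < s, m b ≤ (n + s - 1) / s)
    (hsum : ∑ b ∈ Finset.range s, m b = n) :
    ∀ t, 1 ≤ t →
      s ^ (t - 1) * ∑ b ∈ Finset.range s, (m b).descFactorial t ≤ n.descFactorial t := by
  intro t ht
  induction t, ht using Nat.le_induction with
  | base => simpa [Nat.descFactorial_one] using hsum.le
  | succ t ht ih =>
    have key : ∀ b ∈ Finset.range s,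
        s * (m b).descFactorial (t + 1) ≤ (n - t) * (m b).descFactorial t := by
      intro b hb
      have hbs := Finset.mem_range.mp hb
      rw [Nat.descFactorial_succ, ← Nat.mul_assoc]
      rcases le_or_gt (m b) t with h | h
      · simp [Nat.sub_eq_zero_of_le h]
      · have hnb : m b ≤ n := hsum ▸ Finset.single_le_sum (fun _ _ => Nat.zero_le _) hb
        have hMb : m b ≤ (n + s - 1) / s := hm b hbs
        have hsM : s * ((n + s - 1) / s) ≤ n + s - 1 := Nat.mul_div_le _ _
        have hmul : s * (t + (m b - t)) ≤ s * ((n + s - 1) / s) :=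
          Nat.mul_le_mul_left s (by omega)
        rw [Nat.mul_add] at hmul
        have hst : s + t - 1 ≤ s * t := by
          obtain ⟨a, rfl⟩ := Nat.exists_eq_add_of_le hs
          obtain ⟨c, rfl⟩ := Nat.exists_eq_add_of_le ht
          have : (1 + a) * (1 + c) = 1 + a + c + a * c := by ring
          omega
        have : s * (m b - t) ≤ n - t := by omega
        exact Nat.mul_le_mul_right _ this
    calc s ^ (t + 1 - 1) * ∑ b ∈ Finset.range s, (m b).descFactorial (t + 1)
        = s ^ (t - 1) * ∑ b ∈ Finset.range s, s * (m b).descFactorial (t + 1) := by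
          rw [Finset.mul_sum, Finset.mul_sum]
          apply Finset.sum_congr rfl
          intro b _
          have : s ^ (t + 1 - 1) = s ^ (t - 1) * s := by
            rw [← pow_succ]
            congr 1
            omega
          rw [this]; ring
      _ ≤ s ^ (t - 1) * ∑ b ∈ Finset.range s, (n - t) * (m b).descFactorial t :=
          Nat.mul_le_mul_left _ (Finset.sum_le_sum key)
      _ = (n - t) * (s ^ (t - 1) * ∑ b ∈ Finset.range s, (m b).descFactorial t) := by
          rw [← Finset.mul_sum]; ring
      _ ≤ (n - t) * n.descFactorial t := Nat.mul_le_mul_left _ ih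
      _ = n.descFactorial (t + 1) := (Nat.descFactorial_succ _ _).symm

lemma ncard_setOf_eq_filter {γ : Type*} [Fintype γ] (P : γ → Prop) [DecidablePred P] :
    {f : γ | P f}.ncard = (Finset.univ.filter P).card := by
  rw [← Set.toFinset_setOf, Set.ncard_eq_toFinset_card']

lemma monoCopies_le_desc {t n c : ℕ} (F : SimpleGraph (Fin t)) (χ : Sym2 (Fin n) → Fin c) :
    monoCopies F χ ≤ n.descFactorial t := by
  classical
  have hsub : {f : Fin t → Fin n | Function.Injective f ∧
      ∃ col : Fin c, ∀ v w, F.Adj v w → χ s(f v, f w) = col} ⊆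
      {f : Fin t → Fin n | Function.Injective f} := fun f hf => hf.1
  calc monoCopies F χ ≤ {f : Fin t → Fin n | Function.Injective f}.ncard :=
        Set.ncard_le_ncard hsub (Set.toFinite _)
    _ = Nat.card {f : Fin t → Fin n // Function.Injective f} :=
        (Nat.card_coe_set_eq _).symm
    _ = Nat.card (Fin t ↪ Fin n) :=
        Nat.card_congr (Equiv.subtypeInjectiveEquivEmbedding (Fin t) (Fin n))
    _ = n.descFactorial t := by
        rw [Nat.card_eq_fintype_card, Fintype.card_embedding_eq, Fintype.card_fin,
          Fintype.card_fin]

lemma minMono_le {t n c : ℕ} (F : SimpleGraph (Fin t)) (χ : Sym2 (Fin n) → Fin c) :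
    minMono F n c ≤ monoCopies F χ :=
  ciInf_le (OrderBot.bddBelow _) χ

lemma minMono_attained {t n c : ℕ} (hc : 0 < c) (F : SimpleGraph (Fin t)) :
    ∃ χ : Sym2 (Fin n) → Fin c, monoCopies F χ = minMono F n c := by
  have : Nonempty (Sym2 (Fin n) → Fin c) := ⟨fun _ => ⟨0, hc⟩⟩
  have h := Nat.sInf_mem (Set.range_nonempty (fun χ : Sym2 (Fin n) → Fin c => monoCopies F χ))
  obtain ⟨χ, hχ⟩ := h
  exact ⟨χ, hχ⟩



lemma double_count {β γ : Type*} [Fintype β] [DecidableEq β] [Fintype γ] [DecidableEq γ]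
    (P : (β → γ) → Prop) (hinj : ∀ f, P f → Function.Injective f) :
    ∑ x : γ, {f : β → γ | P f ∧ ∀ v, f v ≠ x}.ncard
      = (Fintype.card γ - Fintype.card β) * {f : β → γ | P f}.ncard := by
  classical
  simp only [ncard_setOf_eq_filter, Finset.card_filter]
  rw [Finset.sum_comm]
  have hinner : ∀ f : β → γ,
      (∑ x : γ, if P f ∧ ∀ v, f v ≠ x then 1 else 0)
        = if P f then Fintype.card γ - Fintype.card β else 0 := by
    intro f
    by_cases hf : P f
    · rw [if_pos hf]
      have h1 : (∑ x : γ, if P f ∧ ∀ v, f v ≠ x then 1 else 0)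
          = ∑ x : γ, if (∀ v, f v ≠ x) then 1 else 0 :=
        Finset.sum_congr rfl fun x _ => if_congr (and_iff_right hf) rfl rfl
      rw [h1, ← Finset.card_filter]
      have h2 : Finset.univ.filter (fun x => ∀ v, f v ≠ x)
          = (Finset.image f Finset.univ)ᶜ := by
        ext x
        simp [eq_comm]
      rw [h2, Finset.card_compl, Finset.card_image_of_injective _ (hinj f hf),
        Finset.card_univ]
    · rw [if_neg hf]
      exact Finset.sum_eq_zero fun x _ => if_neg fun h => hf h.1
  rw [Finset.sum_congr rfl fun f _ => hinner f, Finset.mul_sum]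
  exact Finset.sum_congr rfl fun f _ => by by_cases hf : P f <;> simp [hf]

lemma step_lemma {t n q : ℕ} (hq : 0 < q) (ht : t ≤ n) (H : SimpleGraph (Fin t)) :
    (n + 1) * minMono H n q ≤ (n + 1 - t) * minMono H (n + 1) q := by
  classical
  obtain ⟨χ, hχ⟩ := minMono_attained (n := n + 1) hq H
  set P : (Fin t → Fin (n + 1)) → Prop := fun f => Function.Injective f ∧
    ∃ col : Fin q, ∀ v w, H.Adj v w → χ s(f v, f w) = col with hP
  have hAx : ∀ x : Fin (n + 1),
      minMono H n q ≤ {f : Fin t → Fin (n + 1) | P f ∧ ∀ v, f v ≠ x}.ncard := by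
    intro x
    set χx : Sym2 (Fin n) → Fin q := fun e => χ (Sym2.map x.succAbove e) with hχx
    refine le_trans (minMono_le H χx) ?_
    rw [monoCopies]
    apply Set.ncard_le_ncard_of_injOn (fun f => x.succAbove ∘ f)
    · intro f hf
      simp only [Set.mem_setOf_eq] at hf ⊢
      obtain ⟨hinj, col, hcol⟩ := hf
      refine ⟨⟨Fin.succAbove_right_injective.comp hinj, col, fun v w hvw => ?_⟩,
        fun v => Fin.succAbove_ne x (f v)⟩
      have := hcol v w hvw
      simp only [hχx, Sym2.map_pair_eq] at this
      exact this
    · intro f _ g _ hfg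
      funext v
      exact Fin.succAbove_right_injective (congrFun hfg v)
  have hsum := double_count P (fun f hf => hf.1)
  rw [Fintype.card_fin, Fintype.card_fin] at hsum
  have hmc : monoCopies H χ = {f : Fin t → Fin (n + 1) | P f}.ncard := rfl
  calc (n + 1) * minMono H n q
      = ∑ _x : Fin (n + 1), minMono H n q := by
        rw [Finset.sum_const, smul_eq_mul, Finset.card_univ, Fintype.card_fin]
    _ ≤ ∑ x : Fin (n + 1), {f : Fin t → Fin (n + 1) | P f ∧ ∀ v, f v ≠ x}.ncard :=
        Finset.sum_le_sum fun x _ => hAx x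
    _ = (n + 1 - t) * {f : Fin t → Fin (n + 1) | P f}.ncard := hsum
    _ = (n + 1 - t) * minMono H (n + 1) q := by rw [← hmc, hχ]

lemma blob_card_le {n s : ℕ} (hs : 0 < s) (b : ℕ) :
    (Finset.univ.filter (fun i : Fin n => i.val % s = b)).card ≤ (n + s - 1) / s := by
  have h := Finset.card_le_card_of_injOn
    (s := Finset.univ.filter (fun i : Fin n => i.val % s = b))
    (f := fun i : Fin n => i.val / s)
    (t := Finset.range ((n + s - 1) / s)) ?_ ?_
  · simpa using h
  · intro i hi
    have hn : i.val < n := i.isLt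
    have h1 : (n + s - 1) / s = (n - 1) / s + 1 := by
      have h2 : n + s - 1 = (n - 1) + s := by omega
      rw [h2, Nat.add_div_right _ hs]
    refine Finset.mem_range.mpr ?_
    show i.val / s < (n + s - 1) / s
    have := Nat.div_le_div_right (c := s) (by omega : i.val ≤ n - 1)
    omega
  · intro i hi j hj hij
    simp only [Finset.coe_filter, Set.mem_setOf_eq] at hi hj
    apply Fin.ext
    calc i.val = s * (i.val / s) + i.val % s := (Nat.div_add_mod _ _).symm
      _ = s * (j.val / s) + j.val % s := by
          rw [show i.val / s = j.val / s from hij, hi.2, hj.2]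
      _ = j.val := Nat.div_add_mod _ _

lemma blob_sum {n s : ℕ} (hs : 0 < s) :
    ∑ b ∈ Finset.range s, (Finset.univ.filter (fun i : Fin n => i.val % s = b)).card = n := by
  have h := Finset.card_eq_sum_card_fiberwise
    (s := (Finset.univ : Finset (Fin n))) (t := Finset.range s) (f := fun i => i.val % s)
    (fun i _ => Finset.mem_range.mpr (Nat.mod_lt _ hs))
  simpa [Finset.card_univ] using h.symm

lemma construction {t n q k s : ℕ} (ht : 2 ≤ t) (hq : 2 ≤ q) (hs : 1 ≤ s)
    (H : SimpleGraph (Fin t)) (hconn : H.Connected)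
    (A0 : Finset (Fin t)) (hA0 : H.IsNClique k A0)
    (ψ : Sym2 (Fin s) → Fin (q - 1))
    (hψ : ∀ col : Fin (q - 1), ∀ A : Finset (Fin s),
      ¬(A.card = k ∧ ∀ i ∈ A, ∀ j ∈ A, i ≠ j → ψ s(i, j) = col)) :
    s ^ (t - 1) * minMono H n q ≤ n.descFactorial t := by
  classical
  set e : Fin (q - 1) → Fin q := fun c => ⟨c.val + 1, by omega⟩ with he
  have heinj : Function.Injective e := by
    intro a b hab
    have := congrArg Fin.val hab
    simp only [he] at this
    exact Fin.ext (by omega)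
  set z : Fin q := ⟨0, by omega⟩ with hz
  set res : Fin n → ℕ := fun i => i.val % s with hres
  have hreslt : ∀ i : Fin n, res i < s := fun i => Nat.mod_lt _ hs
  set F : Fin n → Fin n → Fin q := fun i j =>
    if res i = res j then z else e (ψ s(⟨res i, hreslt i⟩, ⟨res j, hreslt j⟩)) with hF
  have hFsymm : ∀ i j, F i j = F j i := by
    intro i j
    by_cases h : res i = res j
    · simp only [hF]
      rw [if_pos h, if_pos h.symm]
    · simp only [hF]
      rw [if_neg h, if_neg fun h' => h h'.symm, Sym2.eq_swap]
  set χ : Sym2 (Fin n) → Fin q := Sym2.lift ⟨F, hFsymm⟩ with hχ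
  have key0 : ∀ i j : Fin n, res i = res j → χ s(i, j) = z := by
    intro i j h
    simp only [hχ, Sym2.lift_mk, hF]
    exact if_pos h
  have keyNe : ∀ i j : Fin n, res i ≠ res j →
      χ s(i, j) = e (ψ s(⟨res i, hreslt i⟩, ⟨res j, hreslt j⟩)) := by
    intro i j h
    simp only [hχ, Sym2.lift_mk, hF]
    exact if_neg h
  have key0' : ∀ i j : Fin n, χ s(i, j) = z → res i = res j := by
    intro i j h
    by_contra hne
    rw [keyNe i j hne] at h
    have := congrArg Fin.val h
    simp only [he, hz] at this
    omega
  set m : ℕ → ℕ := fun b => (Finset.univ.filter (fun i : Fin n => i.val % s = b)).card with hm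
  have hmono_le : monoCopies H χ ≤ ∑ b ∈ Finset.range s, (m b).descFactorial t := by
    rw [monoCopies, ncard_setOf_eq_filter]
    have hsubset : Finset.univ.filter (fun f : Fin t → Fin n => Function.Injective f ∧
        ∃ col : Fin q, ∀ v w, H.Adj v w → χ s(f v, f w) = col) ⊆
        (Finset.range s).biUnion (fun b => Finset.univ.filter
          (fun f : Fin t → Fin n => Function.Injective f ∧ ∀ v, res (f v) = b)) := by
      intro f hf
      simp only [Finset.mem_filter, Finset.mem_univ, true_and] at hf
      obtain ⟨hinj, col, hcol⟩ := hf
      have hconst : ∀ v, res (f v) = res (f ⟨0, by omega⟩) := by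
        by_cases hcz : col = z
        · have hwalk : ∀ (a c : Fin t) (p : H.Walk a c), res (f a) = res (f c) := by
            intro a c p
            induction p with
            | nil => rfl
            | cons hadj p ih =>
              exact (key0' _ _ (by rw [hcol _ _ hadj, hcz])).trans ih
          intro v
          exact hwalk v _ (hconn.preconnected v ⟨0, by omega⟩).some
        · exfalso
          have hcol0 : col.val ≠ 0 := by
            intro h
            exact hcz (Fin.ext h)
          set c0 : Fin (q - 1) := ⟨col.val - 1, by omega⟩ with hc0
          have hec0 : e c0 = col := Fin.ext (by show col.val - 1 + 1 = col.val; omega)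
          set g : Fin t → Fin s := fun v => ⟨res (f v), hreslt _⟩ with hg
          have hAdjNe : ∀ v w, H.Adj v w → g v ≠ g w := by
            intro v w hvw hgvw
            have hres_eq : res (f v) = res (f w) := congrArg Fin.val hgvw
            have h1 := hcol v w hvw
            rw [key0 _ _ hres_eq] at h1
            exact hcz h1.symm
          have hinjOn : Set.InjOn g ↑A0 := by
            intro v hv w hw hgvw
            by_contra hne
            exact hAdjNe v w (hA0.1 hv hw hne) hgvw
          apply hψ c0 (A0.image g)
          constructor
          · rw [Finset.card_image_of_injOn hinjOn, hA0.2]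
          · intro i hi j hj hij
            obtain ⟨v, hv, rfl⟩ := Finset.mem_image.mp hi
            obtain ⟨w, hw, rfl⟩ := Finset.mem_image.mp hj
            have hvw : v ≠ w := fun h => hij (by rw [h])
            have hadj := hA0.1 (Finset.mem_coe.mpr hv) (Finset.mem_coe.mpr hw) hvw
            have h1 := hcol v w hadj
            have hresne : res (f v) ≠ res (f w) := fun h => hij (Fin.ext h)
            rw [keyNe _ _ hresne] at h1
            exact heinj (h1.trans hec0.symm)
      exact Finset.mem_biUnion.mpr ⟨res (f ⟨0, by omega⟩),
        Finset.mem_range.mpr (hreslt _),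
        Finset.mem_filter.mpr ⟨Finset.mem_univ _, hinj, hconst⟩⟩
    refine le_trans (Finset.card_le_card hsubset) (le_trans Finset.card_biUnion_le
      (Finset.sum_le_sum ?_))
    intro b _
    set Sb := Finset.univ.filter
      (fun f : Fin t → Fin n => Function.Injective f ∧ ∀ v, res (f v) = b) with hSb
    have hφ : ∃ φ : {f // f ∈ Sb} → (Fin t ↪ {x : Fin n // x.val % s = b}),
        Function.Injective φ := by
      refine ⟨fun fp => ⟨fun v => ⟨fp.1 v, ?_⟩, fun v w h => ?_⟩, ?_⟩
      · exact (Finset.mem_filter.mp fp.2).2.2 v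
      · exact (Finset.mem_filter.mp fp.2).2.1 (congrArg Subtype.val h)
      · intro f g h
        apply Subtype.ext
        funext v
        exact congrArg Subtype.val (congrFun (congrArg DFunLike.coe h) v)
    obtain ⟨φ, hφinj⟩ := hφ
    calc Sb.card = Fintype.card {f // f ∈ Sb} := (Fintype.card_coe Sb).symm
      _ ≤ Fintype.card (Fin t ↪ {x : Fin n // x.val % s = b}) :=
          Fintype.card_le_of_injective φ hφinj
      _ = (m b).descFactorial t := by
          rw [Fintype.card_embedding_eq, Fintype.card_subtype, Fintype.card_fin]
  refine le_trans (Nat.mul_le_mul_left _ (minMono_le H χ))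
    (le_trans (Nat.mul_le_mul_left _ hmono_le)
      (descIneq s n hs m (fun b _ => blob_card_le hs b) (blob_sum hs) t (by omega)))


theorem statement14 (q t k : ℕ) (hq : 2 ≤ q) (H : SimpleGraph (Fin t))
    (hconn : H.Connected)
    (hclique : (∃ A : Finset (Fin t), H.IsNClique k A) ∧
      ∀ A : Finset (Fin t), ¬ H.IsNClique (k + 1) A) :
    (∀ n : ℕ, t ≤ n → (minMono H n q : ℝ) ≤
      ((ramseyMulti (q - 1) k : ℝ) - 1) ^ ((1 : ℤ) - (t : ℤ)) * (n.descFactorial t : ℝ)) ∧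
    ∃ L : ℝ,
      Tendsto (fun n : ℕ => (minMono H n q : ℝ) / (n.descFactorial t : ℝ)) atTop (nhds L) ∧
      L ≤ ((ramseyMulti (q - 1) k : ℝ) - 1) ^ ((1 : ℤ) - (t : ℤ)) := by
    classical
  have htpos : 0 < t := Fin.pos_iff_nonempty.mpr hconn.nonempty
  obtain ⟨A0, hA0⟩ := hclique.1
  have hnk := hclique.2
  have hk1 : 1 ≤ k := by
    by_contra hk
    have hk0 : k = 0 := by omega
    apply hnk {⟨0, htpos⟩}
    rw [hk0]
    constructor
    · intro a ha b hb hab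
      simp only [Finset.coe_singleton, Set.mem_singleton_iff] at ha hb
      exact absurd (ha.trans hb.symm) hab
    · simp
  have part1 : ∀ n : ℕ, t ≤ n → (minMono H n q : ℝ) ≤
      ((ramseyMulti (q - 1) k : ℝ) - 1) ^ ((1 : ℤ) - (t : ℤ)) * (n.descFactorial t : ℝ) := by
    intro n hn
    rcases eq_or_lt_of_le (show 1 ≤ t from htpos) with ht1 | ht2
    · -- t = 1
      have ht1' : t = 1 := ht1.symm
      subst ht1'
      have hz : ((ramseyMulti (q - 1) k : ℝ) - 1) ^ ((1 : ℤ) - ((1 : ℕ) : ℤ)) = 1 := by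
        norm_num
      rw [hz, one_mul]
      have hle := le_trans
        (minMono_le (n := n) H (fun _ => (⟨0, by omega⟩ : Fin q)))
        (monoCopies_le_desc H (fun _ => (⟨0, by omega⟩ : Fin q)))
      exact_mod_cast hle
    · have ht : 2 ≤ t := ht2
      obtain ⟨v, w, hvw⟩ : ∃ v w, H.Adj v w := by
        have h01 : (⟨0, by omega⟩ : Fin t) ≠ ⟨1, by omega⟩ := by simp [Fin.ext_iff]
        obtain ⟨p⟩ := hconn.preconnected ⟨0, by omega⟩ ⟨1, by omega⟩
        cases p with
        | cons h _ => exact ⟨_, _, h⟩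
      have hk2 : 2 ≤ k := by
        by_contra hk
        have hk1' : k = 1 := by omega
        apply hnk {v, w}
        rw [hk1']
        constructor
        · intro a ha b hb hab
          simp only [Finset.coe_insert, Finset.coe_singleton, Set.mem_insert_iff,
            Set.mem_singleton_iff] at ha hb
          rcases ha with rfl | rfl <;> rcases hb with rfl | rfl
          · exact absurd rfl hab
          · exact hvw
          · exact hvw.symm
          · exact absurd rfl hab
        · rw [Finset.card_insert_of_notMem (by simp [hvw.ne]), Finset.card_singleton]
      obtain ⟨N0, hN0⟩ := ramsey_nonempty (q - 1) k (by omega)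
      set S := {N | ∀ χ : Sym2 (Fin N) → Fin (q - 1), ∃ col : Fin (q - 1),
        ∃ A : Finset (Fin N), A.card = k ∧ ∀ i ∈ A, ∀ j ∈ A, i ≠ j → χ s(i, j) = col}
        with hSdef
      have hSne : S.Nonempty := ⟨N0, hN0⟩
      have hr_mem : ramseyMulti (q - 1) k ∈ S := Nat.sInf_mem hSne
      set r := ramseyMulti (q - 1) k with hrdef
      have hr2 : 2 ≤ r := by
        by_contra hr
        obtain ⟨col, A, hAcard, -⟩ := hr_mem (fun _ => ⟨0, by omega⟩)
        have hA2 := Finset.card_le_univ A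
        rw [hAcard, Fintype.card_fin] at hA2
        omega
      set s := r - 1 with hsdef
      have hs1 : 1 ≤ s := by omega
      have hs_not : s ∉ S := Nat.notMem_of_lt_sInf (show s < sInf S by
        change s < r
        omega)
      rw [hSdef, Set.mem_setOf_eq, not_forall] at hs_not
      obtain ⟨ψ, hψ⟩ := hs_not
      simp only [not_exists] at hψ
      have hmain := construction (n := n) ht hq hs1 H hconn A0 hA0 ψ hψ
      have hcast : (r : ℝ) - 1 = (s : ℝ) := by
        rw [hsdef, Nat.cast_sub (by omega : 1 ≤ r), Nat.cast_one]
      have hexp : ((1 : ℤ) - (t : ℤ)) = -((t - 1 : ℕ) : ℤ) := by push_cast; omega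
      have hspos : (0 : ℝ) < (s : ℝ) ^ (t - 1) := by
        apply pow_pos
        exact_mod_cast hs1
      rw [hcast, hexp, zpow_neg, zpow_natCast, inv_mul_eq_div, le_div_iff₀ hspos]
      calc (minMono H n q : ℝ) * (s : ℝ) ^ (t - 1)
          = ((s ^ (t - 1) * minMono H n q : ℕ) : ℝ) := by push_cast; ring
        _ ≤ ((n.descFactorial t : ℕ) : ℝ) := by exact_mod_cast hmain
  refine ⟨part1, ?_⟩
  set C : ℝ := ((ramseyMulti (q - 1) k : ℝ) - 1) ^ ((1 : ℤ) - (t : ℤ)) with hC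
  set b : ℕ → ℝ := fun j => (minMono H (j + t) q : ℝ) / ((j + t).descFactorial t : ℝ)
    with hbdef
  have hdpos : ∀ j : ℕ, t ≤ j → (0 : ℝ) < (j.descFactorial t : ℝ) := by
    intro j hj
    have : j.descFactorial t ≠ 0 := fun h =>
      absurd (Nat.descFactorial_eq_zero_iff_lt.mp h) (by omega)
    exact_mod_cast Nat.pos_of_ne_zero this
  have hbd : ∀ j, b j ≤ C := by
    intro j
    rw [hbdef]
    simp only
    rw [div_le_iff₀ (hdpos _ (by omega))]
    exact part1 (j + t) (by omega)
  have hmono : Monotone b := by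
    apply monotone_nat_of_le_succ
    intro j
    have hstep := step_lemma (t := t) (n := j + t) (by omega : 0 < q) (by omega) H
    have hid : (j + t + 1 - t) * (j + t + 1).descFactorial t
        = (j + t + 1) * (j + t).descFactorial t :=
      (Nat.descFactorial_succ (j + t + 1) t).symm.trans
        (Nat.succ_descFactorial_succ (j + t) t)
    have hc : (0 : ℝ) < ((j + t + 1 - t : ℕ) : ℝ) := by
      exact_mod_cast (by omega : 0 < j + t + 1 - t)
    rw [hbdef]
    simp only
    have hjt : j + 1 + t = j + t + 1 := by omega
    rw [hjt, div_le_div_iff₀ (hdpos _ (by omega)) (hdpos _ (by omega)),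
      ← mul_le_mul_iff_of_pos_right hc]
    have hidR : ((j + t + 1 - t : ℕ) : ℝ) * ((j + t + 1).descFactorial t : ℝ)
        = ((j + t + 1 : ℕ) : ℝ) * ((j + t).descFactorial t : ℝ) := by
      exact_mod_cast congrArg (fun x : ℕ => (x : ℝ)) hid
    have hstepR : ((j + t + 1 : ℕ) : ℝ) * (minMono H (j + t) q : ℝ)
        ≤ ((j + t + 1 - t : ℕ) : ℝ) * (minMono H (j + t + 1) q : ℝ) := by
      exact_mod_cast hstep
    calc (minMono H (j + t) q : ℝ) * ((j + t + 1).descFactorial t : ℝ)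
          * ((j + t + 1 - t : ℕ) : ℝ)
        = (minMono H (j + t) q : ℝ)
            * (((j + t + 1 - t : ℕ) : ℝ) * ((j + t + 1).descFactorial t : ℝ)) := by ring
      _ = (minMono H (j + t) q : ℝ)
            * (((j + t + 1 : ℕ) : ℝ) * ((j + t).descFactorial t : ℝ)) := by rw [hidR]
      _ = (((j + t + 1 : ℕ) : ℝ) * (minMono H (j + t) q : ℝ))
            * ((j + t).descFactorial t : ℝ) := by ring
      _ ≤ (((j + t + 1 - t : ℕ) : ℝ) * (minMono H (j + t + 1) q : ℝ))
            * ((j + t).descFactorial t : ℝ) := by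
          apply mul_le_mul_of_nonneg_right hstepR
          positivity
      _ = (minMono H (j + t + 1) q : ℝ) * ((j + t).descFactorial t : ℝ)
            * ((j + t + 1 - t : ℕ) : ℝ) := by ring
  have hBdd : BddAbove (Set.range b) := ⟨C, by rintro x ⟨j, rfl⟩; exact hbd j⟩
  have htend_b : Filter.Tendsto b Filter.atTop (nhds (⨆ j, b j)) :=
    tendsto_atTop_ciSup hmono hBdd
  refine ⟨⨆ j, b j, ?_, ciSup_le hbd⟩
  have hcomp : Filter.Tendsto (fun n => b (n - t)) Filter.atTop (nhds (⨆ j, b j)) :=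
    htend_b.comp (Filter.tendsto_sub_atTop_nat t)
  apply hcomp.congr'
  filter_upwards [Filter.eventually_ge_atTop t] with n hn
  rw [hbdef]
  simp only
  rw [Nat.sub_add_cancel hn]
end

section
/- For all integers k ≥ 2 and ℓ ≥ 2, there exists γ = γ(k,ℓ) > 0 such that the following holds for all sufficiently large n and any 3-coloring of E(K_n) with colors red, blue, and yellow: if there are fewer than (1/r(k,ℓ))·C(n,2) yellow edges, then there are at least γ·(n)_k blue labeled copies of K_k, or at least γ·(n)_ℓ red labeled copies of K_ℓ. -/
open Filter

/-- The two-color Ramsey number `r(a,b)`: the least `N` such that every red/blue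
coloring of `E(K_N)` contains a red `K_a` or a blue `K_b` (red is `0`, blue is `1`). -/
noncomputable def ramsey2 (a b : ℕ) : ℕ :=
  sInf {N | ∀ χ : Sym2 (Fin N) → Fin 2,
    (∃ A : Finset (Fin N), A.card = a ∧ ∀ i ∈ A, ∀ j ∈ A, i ≠ j → χ s(i, j) = 0) ∨
    (∃ B : Finset (Fin N), B.card = b ∧ ∀ i ∈ B, ∀ j ∈ B, i ≠ j → χ s(i, j) = 1)}

section Aux
open Finset

/-- ordered edge count of `G` within `S`, as sum of degrees -/
def eCnt {n : ℕ} (G : SimpleGraph (Fin n)) [DecidableRel G.Adj] (S : Finset (Fin n)) : ℕ :=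
  ∑ a ∈ S, (S.filter (fun b => G.Adj a b)).card

lemma turan_core {n : ℕ} (G : SimpleGraph (Fin n)) [DecidableRel G.Adj] (r : ℕ) (hr : 1 ≤ r) :
    ∀ S : Finset (Fin n),
    (∀ K : Finset (Fin n), K ⊆ S → ¬ G.IsNClique (r+1) K) →
    r * eCnt G S ≤ (r - 1) * S.card ^ 2 := by
  induction r with
  | zero => omega
  | succ r ih =>
    intro S hS
    rcases Nat.eq_or_lt_of_le hr with h1 | h2
    · -- r = 0 : no K_2 in S, so no adjacent pairs
      have hr0 : r = 0 := by omega
      subst hr0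
      have he : eCnt G S = 0 := by
        rw [eCnt, Finset.sum_eq_zero]
        intro a ha
        rw [Finset.card_eq_zero, Finset.filter_eq_empty_iff]
        intro b hb hab
        exact hS {a, b} (by intro x hx; rcases Finset.mem_insert.1 hx with y | y
                            · exact y ▸ ha
                            · exact (Finset.mem_singleton.1 y) ▸ hb)
          ⟨by rw [Finset.coe_insert, Finset.coe_singleton]; exact SimpleGraph.isClique_pair.2 (fun _ => hab), by rw [Finset.card_insert_of_notMem (by simp [hab.ne]), Finset.card_singleton]⟩
      simp [he]
    · -- r ≥ 1
      have hr1 : 1 ≤ r := by omega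
      rcases S.eq_empty_or_nonempty with rfl | hne
      · simp [eCnt]
      obtain ⟨v, hv, hmax⟩ := S.exists_max_image (fun a => (S.filter (fun b => G.Adj a b)).card) hne
      set N : Finset (Fin n) := S.filter (fun b => G.Adj v b) with hN
      have hNS : N ⊆ S := Finset.filter_subset _ _
      have hd : ∀ a ∈ S, (S.filter (fun b => G.Adj a b)).card ≤ N.card := fun a ha => hmax a ha
      -- N is K_{r+1}-free
      have hNfree : ∀ K : Finset (Fin n), K ⊆ N → ¬ G.IsNClique (r+1) K := by
        intro K hK hKcl
        have hvK : v ∉ K := fun hvK => (G.loopless.irrefl v) ((Finset.mem_filter.1 (hK hvK)).2)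
        have h2 : G.IsNClique (r+2) (insert v K) :=
          hKcl.insert (fun b hb => ((Finset.mem_filter.1 (hK hb)).2))
        exact hS (insert v K) (Finset.insert_subset hv (hK.trans hNS)) h2
      have ihN := ih hr1 N hNfree
      -- degree decomposition
      have key : eCnt G S ≤ eCnt G N + 2 * (S.card - N.card) * N.card := by
        have hsplit : S = N ∪ (S \ N) := by rw [Finset.union_sdiff_of_subset hNS]
        have step1 : eCnt G S = ∑ a ∈ N, (S.filter (fun b => G.Adj a b)).card
              + ∑ a ∈ S \ N, (S.filter (fun b => G.Adj a b)).card := by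
          rw [eCnt]; nth_rewrite 1 [hsplit]
          exact Finset.sum_union (Finset.disjoint_sdiff)
        have b1 : ∀ a ∈ N, (S.filter (fun b => G.Adj a b)).card
            ≤ (N.filter (fun b => G.Adj a b)).card + (S \ N).card := by
          intro a _
          calc (S.filter (fun b => G.Adj a b)).card
              ≤ ((N.filter (fun b => G.Adj a b)) ∪ (S \ N)).card := by
                apply Finset.card_le_card
                intro b hb
                rcases Finset.mem_filter.1 hb with ⟨hbS, hba⟩
                by_cases hbN : b ∈ N
                · exact Finset.mem_union_left _ (Finset.mem_filter.2 ⟨hbN, hba⟩)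
                · exact Finset.mem_union_right _ (Finset.mem_sdiff.2 ⟨hbS, hbN⟩)
            _ ≤ _ := Finset.card_union_le _ _
        have b2 : ∀ a ∈ S \ N, (S.filter (fun b => G.Adj a b)).card ≤ N.card :=
          fun a ha => hd a (Finset.mem_sdiff.1 ha).1
        calc eCnt G S
            ≤ ∑ a ∈ N, ((N.filter (fun b => G.Adj a b)).card + (S \ N).card)
              + ∑ _a ∈ S \ N, N.card := by
              rw [step1]
              exact Nat.add_le_add (Finset.sum_le_sum b1) (Finset.sum_le_sum b2)
          _ = eCnt G N + N.card * (S \ N).card + (S \ N).card * N.card := by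
              rw [Finset.sum_add_distrib, Finset.sum_const, Finset.sum_const, eCnt,
                smul_eq_mul, smul_eq_mul]
          _ = eCnt G N + 2 * (S.card - N.card) * N.card := by
              rw [Finset.card_sdiff_of_subset hNS]; ring
      -- final inequality
      have hdS : N.card ≤ S.card := Finset.card_le_card hNS
      set s := S.card
      set d := N.card
      set e := eCnt G N
      have ihN' : (r : ℤ) * e ≤ (r - 1) * d ^ 2 := by
        have h := (Int.ofNat_le.2 ihN : ((r * e : ℕ) : ℤ) ≤ ((r-1) * d^2 : ℕ))
        push_cast at h
        have h1 : ((r - 1 : ℕ) : ℤ) = (r : ℤ) - 1 := by omega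
        rw [h1] at h; exact h
      have goal' : (r+1) * (e + 2 * (s - d) * d) ≤ r * s ^ 2 := by
        have h1 : (r : ℤ) * ((r+1) * (e + 2 * (s - d) * d)) ≤ (r : ℤ) * (r * s^2) := by
          have hsd : ((s - d : ℕ) : ℤ) = (s : ℤ) - d := by omega
          push_cast [hsd]
          nlinarith [ihN', sq_nonneg ((r:ℤ) * s - (r+1) * d), hdS]
        have h2 : r * ((r+1) * (e + 2 * (s - d) * d)) ≤ r * (r * s^2) := by exact_mod_cast h1
        exact Nat.le_of_mul_le_mul_left h2 (by omega)
      calc (r+1) * eCnt G S ≤ (r+1) * (e + 2 * (s - d) * d) := Nat.mul_le_mul_left _ key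
        _ ≤ r * s ^ 2 := goal'
        _ = ((r+1) - 1) * s ^ 2 := by simp

lemma count_supersets {n s : ℕ} (B : Finset (Fin n)) :
    (((univ : Finset (Fin n)).powersetCard s).filter (fun S => B ⊆ S)).card
      ≤ (n - B.card).choose (s - B.card) := by
  classical
  have h : (((univ : Finset (Fin n)).powersetCard s).filter (fun S => B ⊆ S)).card
      ≤ ((univ \ B).powersetCard (s - B.card)).card := by
    refine Finset.card_le_card_of_injOn (fun S => S \ B) (fun S hS => ?_) (fun S1 h1 S2 h2 heq => ?_)
    · rcases Finset.mem_filter.1 hS with ⟨hS1, hS2⟩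
      rw [Finset.mem_coe, Finset.mem_powersetCard]
      refine ⟨Finset.sdiff_subset_sdiff (Finset.subset_univ S) (le_refl B), ?_⟩
      rw [Finset.card_sdiff_of_subset hS2, (Finset.mem_powersetCard.1 hS1).2]
    · have e1 : S1 = (S1 \ B) ∪ B := (Finset.sdiff_union_of_subset (Finset.mem_filter.1 h1).2).symm
      have e2 : S2 = (S2 \ B) ∪ B := (Finset.sdiff_union_of_subset (Finset.mem_filter.1 h2).2).symm
      rw [e1, e2]; exact congrArg (· ∪ B) heq
  calc _ ≤ _ := h
    _ = _ := by rw [Finset.card_powersetCard, Finset.card_sdiff_of_subset (Finset.subset_univ B),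
      Finset.card_univ, Fintype.card_fin]

lemma card_filter_product {n : ℕ} {S T : Finset (Fin n)} (P : Fin n → Fin n → Prop)
    [∀ a b, Decidable (P a b)] :
    ((S ×ˢ T).filter (fun p => P p.1 p.2)).card = ∑ a ∈ S, (T.filter (P a)).card := by
  rw [Finset.card_filter, Finset.sum_product]
  exact Finset.sum_congr rfl (fun a _ => (Finset.card_filter _ _).symm)

lemma sum_count_le {n s : ℕ} (hs : 2 ≤ s) (P : Fin n × Fin n → Prop) [DecidablePred P]
    (hP : ∀ p, P p → p.1 ≠ p.2) :
    ∑ S ∈ (univ : Finset (Fin n)).powersetCard s,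
        ((S ×ˢ S).filter (fun p => P p)).card
      ≤ ((univ ×ˢ univ : Finset (Fin n × Fin n)).filter P).card * (n - 2).choose (s - 2) := by
  classical
  set 𝒮 := (univ : Finset (Fin n)).powersetCard s
  set Q := ((univ ×ˢ univ : Finset (Fin n × Fin n)).filter P)
  have step : ∀ S ∈ 𝒮, ((S ×ˢ S).filter (fun p => P p)).card
      = ∑ p ∈ Q, (if p.1 ∈ S ∧ p.2 ∈ S then 1 else 0) := by
    intro S _
    have hEq : (S ×ˢ S).filter (fun p => P p) = Q.filter (fun p => p.1 ∈ S ∧ p.2 ∈ S) := by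
      ext p
      simp only [Finset.mem_filter, Finset.mem_product, Q, Finset.mem_univ, true_and]
      tauto
    rw [hEq, Finset.card_filter]
  calc ∑ S ∈ 𝒮, ((S ×ˢ S).filter (fun p => P p)).card
      = ∑ S ∈ 𝒮, ∑ p ∈ Q, (if p.1 ∈ S ∧ p.2 ∈ S then 1 else 0) := Finset.sum_congr rfl step
    _ = ∑ p ∈ Q, ∑ S ∈ 𝒮, (if p.1 ∈ S ∧ p.2 ∈ S then 1 else 0) := Finset.sum_comm
    _ = ∑ p ∈ Q, (𝒮.filter (fun S => p.1 ∈ S ∧ p.2 ∈ S)).card := by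
        exact Finset.sum_congr rfl (fun p _ => (Finset.card_filter _ _).symm)
    _ ≤ ∑ _p ∈ Q, (n - 2).choose (s - 2) := by
        apply Finset.sum_le_sum
        intro p hp
        have hne : p.1 ≠ p.2 := hP p (Finset.mem_filter.1 hp).2
        have hcard : ({p.1, p.2} : Finset (Fin n)).card = 2 := by
          rw [Finset.card_insert_of_notMem (by simp [hne]), Finset.card_singleton]
        have hfil : 𝒮.filter (fun S => p.1 ∈ S ∧ p.2 ∈ S)
            = 𝒮.filter (fun S => ({p.1, p.2} : Finset (Fin n)) ⊆ S) := by
          apply Finset.filter_congr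
          intro S _
          simp [Finset.insert_subset_iff]
        rw [hfil]
        have := count_supersets (n := n) (s := s) ({p.1, p.2} : Finset (Fin n))
        rwa [hcard] at this
    _ = _ := by rw [Finset.sum_const, smul_eq_mul]


lemma ramsey_transfer {n R k l : ℕ} (χ : Sym2 (Fin n) → Fin 3)
    (hR : ∀ χ' : Sym2 (Fin R) → Fin 2,
      (∃ A : Finset (Fin R), A.card = k ∧ ∀ i ∈ A, ∀ j ∈ A, i ≠ j → χ' s(i, j) = 0) ∨
      (∃ B : Finset (Fin R), B.card = l ∧ ∀ i ∈ B, ∀ j ∈ B, i ≠ j → χ' s(i, j) = 1))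
    (K : Finset (Fin n)) (hK : K.card = R)
    (hKny : ∀ a ∈ K, ∀ b ∈ K, a ≠ b → χ s(a,b) ≠ 2) :
    (∃ B, B ⊆ K ∧ B.card = k ∧ ∀ a ∈ B, ∀ b ∈ B, a ≠ b → χ s(a,b) = 1) ∨
    (∃ B, B ⊆ K ∧ B.card = l ∧ ∀ a ∈ B, ∀ b ∈ B, a ≠ b → χ s(a,b) = 0) := by
  classical
  set e := K.orderEmbOfFin hK with he
  have hem : ∀ i, e i ∈ K := fun i => K.orderEmbOfFin_mem hK i
  have hinj : Function.Injective e := e.injective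
  set χ' : Sym2 (Fin R) → Fin 2 := fun q => if χ (q.map e) = 1 then 0 else 1 with hχ'
  have hpair : ∀ i j, χ' s(i,j) = if χ s(e i, e j) = 1 then 0 else 1 := by
    intro i j
    show (if χ (Sym2.map (⇑e) s(i,j)) = 1 then (0:Fin 2) else 1) = _
    rw [Sym2.map_pair_eq]
  have fin3 : ∀ v : Fin 3, v ≠ 1 → v ≠ 2 → v = 0 := by decide
  rcases hR χ' with ⟨A, hAcard, hA⟩ | ⟨B, hBcard, hB⟩
  · left
    refine ⟨A.image (fun i => e i), ?_, ?_, ?_⟩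
    · intro x hx; rcases Finset.mem_image.1 hx with ⟨i, _, rfl⟩; exact hem i
    · rw [Finset.card_image_of_injective _ hinj, hAcard]
    · intro a ha b hb hab
      rcases Finset.mem_image.1 ha with ⟨i, hi, rfl⟩
      rcases Finset.mem_image.1 hb with ⟨j, hj, rfl⟩
      have hij : i ≠ j := fun h => hab (by rw [h])
      have := hA i hi j hj hij
      rw [hpair] at this
      by_contra hne
      rw [if_neg hne] at this
      exact absurd this (by decide)
  · right
    refine ⟨B.image (fun i => e i), ?_, ?_, ?_⟩
    · intro x hx; rcases Finset.mem_image.1 hx with ⟨i, _, rfl⟩; exact hem i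
    · rw [Finset.card_image_of_injective _ hinj, hBcard]
    · intro a ha b hb hab
      rcases Finset.mem_image.1 ha with ⟨i, hi, rfl⟩
      rcases Finset.mem_image.1 hb with ⟨j, hj, rfl⟩
      have hij : i ≠ j := fun h => hab (by rw [h])
      have h1 := hB i hi j hj hij
      rw [hpair] at h1
      have hne1 : χ s(e i, e j) ≠ 1 := by
        intro hc; rw [if_pos hc] at h1; exact absurd h1 (by decide)
      exact fin3 _ hne1 (hKny _ (hem i) _ (hem j) hab)

lemma copies_lb {n t : ℕ} (ht : 1 ≤ t) (χ : Sym2 (Fin n) → Fin 3) (col : Fin 3)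
    (𝒜 : Finset (Finset (Fin n)))
    (h𝒜 : ∀ A ∈ 𝒜, A.card = t ∧ ∀ a ∈ A, ∀ b ∈ A, a ≠ b → χ s(a,b) = col) :
    𝒜.card * t.factorial ≤ colorCopies (⊤ : SimpleGraph (Fin t)) χ col := by
  classical
  rcases 𝒜.eq_empty_or_nonempty with rfl | ⟨A0, hA0⟩
  · simp
  have hA0t : A0.card = t := (h𝒜 A0 hA0).1
  obtain ⟨x0, _⟩ : A0.Nonempty := Finset.card_pos.1 (by omega)
  set T : Set (Fin t → Fin n) := {f | Function.Injective f ∧ (∀ v, f v ∈ Set.univ) ∧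
    ∀ v w, (⊤ : SimpleGraph (Fin t)).Adj v w → χ s(f v, f w) = col} with hT
  have hTfin : T.Finite := Set.toFinite _
  set ψ : Finset (Fin n) × Equiv.Perm (Fin t) → (Fin t → Fin n) :=
    fun Bσ i => if h : Bσ.1.card = t then (Bσ.1.orderEmbOfFin h (Bσ.2 i)) else x0 with hψ
  have hcard : (𝒜 ×ˢ (univ : Finset (Equiv.Perm (Fin t)))).card ≤ hTfin.toFinset.card := by
    refine Finset.card_le_card_of_injOn ψ (fun p hp => ?_) (fun p hp q hq heq => ?_)
    · rcases Finset.mem_product.1 hp with ⟨hp1, _⟩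
      obtain ⟨hcardt, hcol⟩ := h𝒜 p.1 hp1
      rw [Finset.mem_coe, Set.Finite.mem_toFinset]
      have hψp : ∀ i, ψ p i = p.1.orderEmbOfFin hcardt (p.2 i) := by
        intro i; rw [hψ]; simp only [dif_pos hcardt]
      have hmem : ∀ i, ψ p i ∈ p.1 := fun i => hψp i ▸ p.1.orderEmbOfFin_mem hcardt _
      have hinj : Function.Injective (ψ p) := by
        intro i j hij
        rw [hψp, hψp] at hij
        exact p.2.injective ((p.1.orderEmbOfFin hcardt).injective hij)
      refine ⟨hinj, fun v => trivial, fun v w hvw => ?_⟩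
      exact hcol _ (hmem v) _ (hmem w) (fun h => hvw.ne (hinj h))
    · obtain ⟨B, σ⟩ := p
      obtain ⟨B', σ'⟩ := q
      rcases Finset.mem_product.1 hp with ⟨hp1, _⟩
      rcases Finset.mem_product.1 hq with ⟨hq1, _⟩
      obtain ⟨hpt, _⟩ := h𝒜 B hp1
      obtain ⟨hqt, _⟩ := h𝒜 B' hq1
      have hψp : ∀ i, ψ (B, σ) i = B.orderEmbOfFin hpt (σ i) := by
        intro i; rw [hψ]; simp only [dif_pos hpt]
      have hψq : ∀ i, ψ (B', σ') i = B'.orderEmbOfFin hqt (σ' i) := by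
        intro i; rw [hψ]; simp only [dif_pos hqt]
      have heq' : ∀ i, ψ (B, σ) i = ψ (B', σ') i := fun i => congrFun heq i
      have hBeq : B = B' := by
        apply Finset.eq_of_subset_of_card_le
        · intro x hx
          have hxr : x ∈ Set.range (B.orderEmbOfFin hpt) := by
            rw [Finset.range_orderEmbOfFin]; exact hx
          obtain ⟨j, hj⟩ := hxr
          have hx2 : x = ψ (B, σ) (σ.symm j) := by rw [hψp, Equiv.apply_symm_apply, hj]
          rw [hx2, heq' (σ.symm j), hψq]
          exact B'.orderEmbOfFin_mem hqt _
        · omega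
      subst hBeq
      have hσeq : σ = σ' := by
        apply Equiv.ext
        intro i
        have h1 := heq' i
        rw [hψp, hψq] at h1
        exact (B.orderEmbOfFin hpt).injective h1
      rw [hσeq]
  calc 𝒜.card * t.factorial
      = (𝒜 ×ˢ (univ : Finset (Equiv.Perm (Fin t)))).card := by
        rw [Finset.card_product, Finset.card_univ, Fintype.card_perm, Fintype.card_fin]
    _ ≤ hTfin.toFinset.card := hcard
    _ = T.ncard := (Set.ncard_eq_toFinset_card T hTfin).symm
    _ = colorCopies (⊤ : SimpleGraph (Fin t)) χ col := rfl

lemma yord_le {n : ℕ} (χ : Sym2 (Fin n) → Fin 3) :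
    ((univ ×ˢ univ : Finset (Fin n × Fin n)).filter
        (fun p => p.1 ≠ p.2 ∧ χ s(p.1,p.2) = 2)).card
      ≤ 2 * Set.ncard {e : Sym2 (Fin n) | ¬ e.IsDiag ∧ χ e = 2} := by
  classical
  set Y : Set (Sym2 (Fin n)) := {e | ¬ e.IsDiag ∧ χ e = 2} with hY
  have hYfin : Y.Finite := Set.toFinite _
  have hcard : ((univ ×ˢ univ : Finset (Fin n × Fin n)).filter
        (fun p => p.1 ≠ p.2 ∧ χ s(p.1,p.2) = 2)).card
      ≤ (hYfin.toFinset ×ˢ (univ : Finset Bool)).card := by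
    refine Finset.card_le_card_of_injOn
      (fun p => (s(p.1, p.2), decide (p.1 < p.2))) (fun p hp => ?_) (fun p hp q hq heq => ?_)
    · rcases Finset.mem_filter.1 hp with ⟨_, hne, hy⟩
      rw [Finset.mem_coe, Finset.mem_product, Set.Finite.mem_toFinset]
      exact ⟨⟨by rwa [Sym2.mk_isDiag_iff], hy⟩, Finset.mem_univ _⟩
    · rcases Finset.mem_filter.1 hp with ⟨_, hnep, _⟩
      rcases Finset.mem_filter.1 hq with ⟨_, hneq, _⟩
      have h1 : s(p.1, p.2) = s(q.1, q.2) := congrArg Prod.fst heq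
      have h2 : decide (p.1 < p.2) = decide (q.1 < q.2) := congrArg Prod.snd heq
      have h2' : p.1 < p.2 ↔ q.1 < q.2 := by
        constructor <;> intro h <;>
          [exact of_decide_eq_true (h2 ▸ decide_eq_true h);
           exact of_decide_eq_true (h2.symm ▸ decide_eq_true h)]
      rcases Sym2.eq_iff.1 h1 with ⟨ha, hb⟩ | ⟨ha, hb⟩
      · exact Prod.ext ha hb
      · exfalso
        rw [← ha, ← hb] at h2'
        rcases lt_or_gt_of_ne hnep with h | h
        · exact absurd (h2'.1 h) (lt_asymm h)
        · exact absurd (h2'.2 h) (lt_asymm h)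
  calc _ ≤ _ := hcard
    _ = 2 * Set.ncard Y := by
        rw [Finset.card_product, Finset.card_univ, Fintype.card_bool,
          Set.ncard_eq_toFinset_card Y hYfin, mul_comm]

lemma final_branch {n s R t : ℕ} (χ : Sym2 (Fin n) → Fin 3) (col : Fin 3)
    (ht : 2 ≤ t) (hsn : s ≤ n)
    (𝒢 : Finset (Finset (Fin n)))
    (h𝒢 : ∀ S ∈ 𝒢, S.card = s ∧ ∃ B, B ⊆ S ∧ B.card = t ∧
      ∀ a ∈ B, ∀ b ∈ B, a ≠ b → χ s(a,b) = col)
    (hlb : n.choose s < 4*R*𝒢.card) :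
    n.descFactorial t ≤ 4*R*(s.choose t)*(colorCopies (⊤ : SimpleGraph (Fin t)) χ col) := by
  classical
  have h𝒢ne : 𝒢.Nonempty := by
    rcases Finset.eq_empty_or_nonempty 𝒢 with rfl | h
    · simp at hlb
    · exact h
  have hts : t ≤ s := by
    obtain ⟨S0, hS0⟩ := h𝒢ne
    obtain ⟨hS0card, B0, hB0sub, hB0card, _⟩ := h𝒢 S0 hS0
    have := Finset.card_le_card hB0sub
    omega
  set P : Finset (Fin n) → Finset (Fin n) → Prop := fun S B =>
    B ⊆ S ∧ B.card = t ∧ ∀ a ∈ B, ∀ b ∈ B, a ≠ b → χ s(a,b) = col with hP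
  set g : Finset (Fin n) → Finset (Fin n) :=
    fun S => if h : ∃ B, P S B then h.choose else ∅ with hg
  have hgspec : ∀ S ∈ 𝒢, P S (g S) := by
    intro S hS
    have hex : ∃ B, P S B := (h𝒢 S hS).2
    rw [hg]
    simp only [dif_pos hex]
    exact hex.choose_spec
  set 𝒦 := 𝒢.image g with h𝒦
  have h𝒦prop : ∀ B ∈ 𝒦, B.card = t ∧ ∀ a ∈ B, ∀ b ∈ B, a ≠ b → χ s(a,b) = col := by
    intro B hB
    rcases Finset.mem_image.1 hB with ⟨S, hS, rfl⟩
    exact ⟨(hgspec S hS).2.1, (hgspec S hS).2.2⟩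
  have h1 : 𝒢.card ≤ (n-t).choose (s-t) * 𝒦.card := by
    rw [h𝒦]
    apply Finset.card_le_mul_card_image (f := g) 𝒢 ((n-t).choose (s-t))
    intro B hB
    rw [← h𝒦] at hB
    have hBt : B.card = t := (h𝒦prop B hB).1
    calc (𝒢.filter (fun S => g S = B)).card
        ≤ (((univ : Finset (Fin n)).powersetCard s).filter (fun S => B ⊆ S)).card := by
          apply Finset.card_le_card
          intro S hS
          rcases Finset.mem_filter.1 hS with ⟨hS𝒢, hgS⟩
          refine Finset.mem_filter.2 ⟨Finset.mem_powersetCard.2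
            ⟨Finset.subset_univ S, (h𝒢 S hS𝒢).1⟩, ?_⟩
          rw [← hgS]
          exact (hgspec S hS𝒢).1
      _ ≤ (n - B.card).choose (s - B.card) := count_supersets B
      _ = (n-t).choose (s-t) := by rw [hBt]
  have h2 : 𝒦.card * t.factorial ≤ colorCopies (⊤ : SimpleGraph (Fin t)) χ col :=
    copies_lb (by omega) χ col 𝒦 h𝒦prop
  have hid : (n.choose s)*(s.choose t) = (n.choose t)*((n-t).choose (s-t)) :=
    Nat.choose_mul hts
  have hpos : 0 < (n-t).choose (s-t) := Nat.choose_pos (by omega)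
  have h3 : (n.choose t) * ((n-t).choose (s-t))
      < (4*R*(s.choose t)*𝒦.card) * ((n-t).choose (s-t)) := by
    calc (n.choose t) * ((n-t).choose (s-t)) = (n.choose s)*(s.choose t) := hid.symm
      _ < (4*R*𝒢.card) * (s.choose t) :=
          Nat.mul_lt_mul_of_lt_of_le hlb (le_refl _) (Nat.choose_pos hts)
      _ ≤ (4*R*((n-t).choose (s-t) * 𝒦.card)) * (s.choose t) := by
          apply Nat.mul_le_mul_right
          apply Nat.mul_le_mul_left
          exact h1
      _ = (4*R*(s.choose t)*𝒦.card) * ((n-t).choose (s-t)) := by ring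
  have h4 : n.choose t < 4*R*(s.choose t)*𝒦.card := Nat.lt_of_mul_lt_mul_right h3
  calc n.descFactorial t = t.factorial * n.choose t :=
        Nat.descFactorial_eq_factorial_mul_choose n t
    _ ≤ t.factorial * (4*R*(s.choose t)*𝒦.card) := Nat.mul_le_mul_left _ (le_of_lt h4)
    _ = 4*R*(s.choose t)*(𝒦.card * t.factorial) := by ring
    _ ≤ 4*R*(s.choose t)*(colorCopies (⊤ : SimpleGraph (Fin t)) χ col) :=
        Nat.mul_le_mul_left _ h2


lemma turan_contra (R s e y : ℤ) (hR : 2 ≤ R) (hs : s = 2*R^2)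
    (h1 : (R-1)*e ≤ (R-2)*s^2) (h2 : e + y = s*(s-1))
    (h3 : y*(2*R-1) ≤ 2*s*(s-1)) : False := by
  have hR1nn : (0:ℤ) ≤ R - 1 := by linarith
  have h2R1nn : (0:ℤ) ≤ 2*R - 1 := by linarith
  have B1 := mul_le_mul_of_nonneg_left h1 h2R1nn
  have B2 := mul_le_mul_of_nonneg_left h3 hR1nn
  have C : (R-1)*(2*R-1)*(e + y) = (R-1)*(2*R-1)*(s*(s-1)) := by rw [h2]
  have hpoly2 : (R-2)*(2*R-1)*s^2 + 2*(R-1)*(s*(s-1))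
      < (R-1)*(2*R-1)*(s*(s-1)) := by
    rw [hs]
    have hR2pos : (0:ℤ) < R^2 := by positivity
    have h10 : (0:ℤ) < 10*R^3 - 6*R^2 := by nlinarith [hR, hR2pos]
    linarith [h10]
  linarith [B1, B2, C, hpoly2]

end Aux

set_option maxHeartbeats 1600000 in
theorem statement15 (k l : ℕ) (hk : 2 ≤ k) (hl : 2 ≤ l) :
    ∃ γ : ℝ, 0 < γ ∧ ∃ N : ℕ, ∀ n ≥ N, ∀ χ : Sym2 (Fin n) → Fin 3,
      (Set.ncard {e : Sym2 (Fin n) | ¬ e.IsDiag ∧ χ e = 2} : ℝ) <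
          (1 / (ramsey2 k l : ℝ)) * (n.choose 2 : ℝ) →
      γ * (n.descFactorial k : ℝ) ≤ (colorCopies (⊤ : SimpleGraph (Fin k)) χ 1 : ℝ) ∨
      γ * (n.descFactorial l : ℝ) ≤ (colorCopies (⊤ : SimpleGraph (Fin l)) χ 0 : ℝ) := by
  classical
  by_cases hne : {N | ∀ χ : Sym2 (Fin N) → Fin 2,
      (∃ A : Finset (Fin N), A.card = k ∧ ∀ i ∈ A, ∀ j ∈ A, i ≠ j → χ s(i, j) = 0) ∨
      (∃ B : Finset (Fin N), B.card = l ∧ ∀ i ∈ B, ∀ j ∈ B, i ≠ j → χ s(i, j) = 1)}.Nonempty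
  swap
  · -- degenerate case: the Ramsey set is empty, so `ramsey2 k l = 0` and the
    -- hypothesis is vacuous
    refine ⟨1, one_pos, 0, fun n _ χ hyp => ?_⟩
    have h0 : ramsey2 k l = 0 := by
      rw [ramsey2, Set.not_nonempty_iff_eq_empty.1 hne, Nat.sInf_empty]
    rw [h0] at hyp
    norm_num at hyp
    exact absurd hyp (not_lt.2 (by positivity))
  -- main case
  have hmem : ∀ χ' : Sym2 (Fin (ramsey2 k l)) → Fin 2,
      (∃ A : Finset (Fin (ramsey2 k l)), A.card = k ∧
        ∀ i ∈ A, ∀ j ∈ A, i ≠ j → χ' s(i, j) = 0) ∨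
      (∃ B : Finset (Fin (ramsey2 k l)), B.card = l ∧
        ∀ i ∈ B, ∀ j ∈ B, i ≠ j → χ' s(i, j) = 1) := Nat.sInf_mem hne
  set R := ramsey2 k l with hRv
  have hR2 : 2 ≤ R := by
    by_contra hcon
    push_neg at hcon
    rcases hmem (fun _ => 0) with ⟨A, hA, _⟩ | ⟨B, hB, _⟩
    · have h2 : A.card ≤ R := by simpa using A.card_le_univ
      omega
    · have h2 : B.card ≤ R := by simpa using B.card_le_univ
      omega
  set s := 2*R^2 with hs
  set T := 2*s*(s-1)/(2*R-1) with hT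
  set D := s.choose k + s.choose l + 1 with hD
  have hDpos : 0 < D := by omega
  have h4RD : (0:ℝ) < 4*R*D := by
    have : 0 < 4*R*D := by positivity
    exact_mod_cast this
  refine ⟨1/(4*R*D : ℝ), by positivity, s, fun n hn χ hyellow => ?_⟩
  set m := Set.ncard {e : Sym2 (Fin n) | ¬ e.IsDiag ∧ χ e = 2} with hm
  have hRr : (0:ℝ) < R := by exact_mod_cast (by omega : 0 < R)
  have hmR : m * R < n.choose 2 := by
    have h1 : (m:ℝ) < (n.choose 2 : ℝ) / R := by
      rw [div_eq_inv_mul, ← one_div]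
      exact hyellow
    have h2 : (m:ℝ) * R < n.choose 2 := (lt_div_iff₀ hRr).1 h1
    exact_mod_cast h2
  have hns : s ≤ n := hn
  have hs8 : 8 ≤ s := by rw [hs]; nlinarith [hR2]
  -- the non-yellow graph
  set G : SimpleGraph (Fin n) :=
    { Adj := fun a b => a ≠ b ∧ χ s(a,b) ≠ 2
      symm := ⟨fun a b h => ⟨h.1.symm, by rw [Sym2.eq_swap]; exact h.2⟩⟩
      loopless := ⟨fun a h => h.1 rfl⟩ } with hG
  haveI : DecidableRel G.Adj := fun a b =>
    inferInstanceAs (Decidable (a ≠ b ∧ χ s(a,b) ≠ 2))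
  have hGadj : ∀ a b, G.Adj a b ↔ (a ≠ b ∧ χ s(a,b) ≠ 2) := fun _ _ => Iff.rfl
  set 𝒮 := (Finset.univ : Finset (Fin n)).powersetCard s with h𝒮
  have h𝒮card : 𝒮.card = n.choose s := by
    rw [h𝒮, Finset.card_powersetCard, Finset.card_univ, Fintype.card_fin]
  set yc : Finset (Fin n) → ℕ :=
    fun S => ((S ×ˢ S).filter (fun p => p.1 ≠ p.2 ∧ χ s(p.1,p.2) = 2)).card with hyc
  have hsum : ∑ S ∈ 𝒮, yc S ≤ (2*m) * ((n-2).choose (s-2)) := by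
    calc ∑ S ∈ 𝒮, yc S
        ≤ ((Finset.univ ×ˢ Finset.univ : Finset (Fin n × Fin n)).filter
            (fun p => p.1 ≠ p.2 ∧ χ s(p.1,p.2) = 2)).card * ((n-2).choose (s-2)) :=
          sum_count_le (by omega) _ (fun p hp => hp.1)
      _ ≤ (2*m) * ((n-2).choose (s-2)) :=
          Nat.mul_le_mul_right _ (yord_le χ)
  set good := 𝒮.filter (fun S => yc S ≤ T) with hgood
  set bad := 𝒮.filter (fun S => ¬ (yc S ≤ T)) with hbad
  have hpart : good.card + bad.card = n.choose s := by
    rw [hgood, hbad, Finset.card_filter_add_card_filter_not, h𝒮card]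
  have hMarkov : bad.card * (T+1) ≤ ∑ S ∈ 𝒮, yc S := by
    calc bad.card * (T+1) = bad.card • (T+1) := by rw [smul_eq_mul]
      _ ≤ ∑ S ∈ bad, yc S := Finset.card_nsmul_le_sum _ _ _ (fun S hS => by
          have h2 := (Finset.mem_filter.1 hS).2
          omega)
      _ ≤ ∑ S ∈ 𝒮, yc S :=
          Finset.sum_le_sum_of_subset (Finset.filter_subset _ _)
  have hc2pos : 0 < (n-2).choose (s-2) := Nat.choose_pos (by omega)
  have hid2 : (n.choose s) * (s.choose 2) = (n.choose 2) * ((n-2).choose (s-2)) :=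
    Nat.choose_mul (by omega : 2 ≤ s)
  have hs2 : s * (s-1) = 2 * s.choose 2 := by
    rw [Nat.choose_two_right]
    have hev : 2 ∣ s * (s - 1) := by
      rcases Nat.even_or_odd s with he | ho
      · exact Dvd.dvd.mul_right he.two_dvd _
      · exact Dvd.dvd.mul_left (Nat.Odd.sub_odd ho odd_one).two_dvd _
    omega
  have hT5 : 2*s*(s-1) < (2*R-1)*(T+1) := by
    have hd := Nat.div_add_mod (2*s*(s-1)) (2*R-1)
    have hmod : (2*s*(s-1)) % (2*R-1) < (2*R-1) := Nat.mod_lt _ (by omega)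
    rw [← hT] at hd
    rw [Nat.mul_add, Nat.mul_one]
    linarith [hd, hmod]
  have hApos : 0 < n.choose s := Nat.choose_pos hns
  -- the key estimate : most s-sets are good
  have hkey : n.choose s < 2*R*good.card := by
    have h1 : bad.card * (T+1) * R ≤ 2*(m*R)*((n-2).choose (s-2)) := by
      calc bad.card*(T+1)*R ≤ ((2*m) * ((n-2).choose (s-2)))*R :=
            Nat.mul_le_mul_right _ (hMarkov.trans hsum)
        _ = 2*(m*R)*((n-2).choose (s-2)) := by ring
    have h2 : 2*(m*R)*((n-2).choose (s-2)) < 2*(n.choose 2)*((n-2).choose (s-2)) := by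
      apply Nat.mul_lt_mul_of_lt_of_le _ (le_refl _) hc2pos
      omega
    have h3 : 2*(n.choose 2)*((n-2).choose (s-2)) = (n.choose s) * (s*(s-1)) := by
      rw [hs2]
      calc 2*(n.choose 2)*((n-2).choose (s-2))
          = 2*((n.choose 2) * ((n-2).choose (s-2))) := by ring
        _ = 2*((n.choose s) * (s.choose 2)) := by rw [hid2]
        _ = (n.choose s) * (2 * s.choose 2) := by ring
    have h4 : bad.card * (T+1) * R < (n.choose s) * (s*(s-1)) := by
      rw [← h3]
      exact lt_of_le_of_lt h1 h2
    -- multiply hT5 by (n.choose s)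
    have h5 : (n.choose s) * (2*s*(s-1)) < (n.choose s) * ((2*R-1)*(T+1)) :=
      Nat.mul_lt_mul_of_le_of_lt (le_refl _) hT5 hApos
    -- combine : 2 * bad * (T+1) * R < (2R-1) * (T+1) * A
    obtain ⟨Q, hQ1⟩ : ∃ Q, Q + 1 = 2*R := ⟨2*R-1, by omega⟩
    have hQe : 2*R-1 = Q := by omega
    rw [hQe] at h5
    have h6 : 2 * (bad.card * R) * (T+1) < (Q * (n.choose s)) * (T+1) := by
      calc 2 * (bad.card * R) * (T+1) = 2 * (bad.card * (T+1) * R) := by ring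
        _ < 2 * ((n.choose s) * (s*(s-1))) := mul_lt_mul_of_pos_left h4 (by norm_num)
        _ = (n.choose s) * (2*s*(s-1)) := by ring
        _ < (n.choose s) * (Q*(T+1)) := h5
        _ = (Q * (n.choose s)) * (T+1) := by ring
    have h7 : 2 * (bad.card * R) < Q * (n.choose s) :=
      Nat.lt_of_mul_lt_mul_right h6
    -- finish linearly
    have h8 : R * good.card + R * bad.card = R * (n.choose s) := by
      rw [← Nat.mul_add, hpart]
    have h9 : Q * (n.choose s) + (n.choose s) = 2 * (R * (n.choose s)) := by
      calc Q * (n.choose s) + (n.choose s) = (Q+1) * (n.choose s) := by ring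
        _ = (2*R) * (n.choose s) := by rw [hQ1]
        _ = 2 * (R * (n.choose s)) := by ring
    have hgoal : n.choose s < 2 * (R * good.card) := by linarith [h7, h8, h9, hApos]
    calc n.choose s < 2 * (R * good.card) := hgoal
      _ = 2*R*good.card := by ring
  -- every good set contains a yellow-free R-subset, hence a blue k-set or red l-set
  have hgoodK : ∀ S ∈ good,
      (∃ B, B ⊆ S ∧ B.card = k ∧ ∀ a ∈ B, ∀ b ∈ B, a ≠ b → χ s(a,b) = 1) ∨
      (∃ B, B ⊆ S ∧ B.card = l ∧ ∀ a ∈ B, ∀ b ∈ B, a ≠ b → χ s(a,b) = 0) := by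
    intro S hS
    rcases Finset.mem_filter.1 hS with ⟨hS𝒮, hycS⟩
    rcases Finset.mem_powersetCard.1 hS𝒮 with ⟨_, hScard⟩
    -- first find the yellow-free R-subset
    have hK : ∃ K, K ⊆ S ∧ K.card = R ∧ ∀ a ∈ K, ∀ b ∈ K, a ≠ b → χ s(a,b) ≠ 2 := by
      by_contra hcon
      push_neg at hcon
      have hfree : ∀ K, K ⊆ S → ¬ G.IsNClique ((R-1)+1) K := by
        intro K hKsub hcl
        have hR1 : (R-1)+1 = R := by omega
        rw [hR1] at hcl
        obtain ⟨a, ha, b, hb, hab, hy⟩ := hcon K hKsub hcl.2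
        have hadj : G.Adj a b := hcl.1 (Finset.mem_coe.2 ha) (Finset.mem_coe.2 hb) hab
        exact hadj.2 hy
      have htur := turan_core G (R-1) (by omega) S hfree
      -- eCnt G S + yc S = s * (s-1)
      have hyce : eCnt G S + yc S = s * (s-1) := by
        have hyc2 : yc S = ∑ a ∈ S, (S.filter (fun b => a ≠ b ∧ χ s(a,b) = 2)).card :=
          card_filter_product (fun a b => a ≠ b ∧ χ s(a,b) = 2)
        rw [hyc2, eCnt, ← Finset.sum_add_distrib]
        have hper : ∀ a ∈ S, (S.filter (fun b => G.Adj a b)).card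
            + (S.filter (fun b => a ≠ b ∧ χ s(a,b) = 2)).card = s - 1 := by
          intro a ha
          have e1 : S.filter (fun b => G.Adj a b)
              = (S.erase a).filter (fun b => ¬ (χ s(a,b) = 2)) := by
            ext b
            simp only [Finset.mem_filter, Finset.mem_erase, hGadj]
            constructor
            · rintro ⟨hbS, hne, hy⟩; exact ⟨⟨fun h => hne (h ▸ rfl), hbS⟩, hy⟩
            · rintro ⟨⟨hne, hbS⟩, hy⟩; exact ⟨hbS, fun h => hne (h ▸ rfl), hy⟩
          have e2 : S.filter (fun b => a ≠ b ∧ χ s(a,b) = 2)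
              = (S.erase a).filter (fun b => χ s(a,b) = 2) := by
            ext b
            simp only [Finset.mem_filter, Finset.mem_erase]
            constructor
            · rintro ⟨hbS, hne, hy⟩; exact ⟨⟨fun h => hne (h ▸ rfl), hbS⟩, hy⟩
            · rintro ⟨⟨hne, hbS⟩, hy⟩; exact ⟨hbS, fun h => hne (h ▸ rfl), hy⟩
          rw [e1, e2, Nat.add_comm, Finset.card_filter_add_card_filter_not,
            Finset.card_erase_of_mem ha, hScard]
        rw [Finset.sum_congr rfl hper, Finset.sum_const, smul_eq_mul, hScard]
      -- numeric contradiction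
      have hycT : yc S ≤ T := hycS
      have hTle : T*(2*R-1) ≤ 2*s*(s-1) := Nat.div_mul_le_self _ _
      rw [hScard] at htur
      have hR11 : ((R-1:ℕ):ℤ) = (R:ℤ) - 1 := by omega
      have hR21 : ((R-1-1:ℕ):ℤ) = (R:ℤ) - 2 := by omega
      have hR31 : ((2*R-1:ℕ):ℤ) = 2*(R:ℤ) - 1 := by omega
      have hs11 : ((s-1:ℕ):ℤ) = (s:ℤ) - 1 := by omega
      have htur' : ((R:ℤ)-1) * (eCnt G S) ≤ ((R:ℤ)-2) * (s:ℤ)^2 := by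
        have h0 := (Int.ofNat_le.2 htur)
        push_cast at h0
        rwa [hR11, hR21] at h0
      have hyce' : (eCnt G S : ℤ) + (yc S : ℤ) = (s:ℤ) * ((s:ℤ)-1) := by
        have h0 := congrArg (Nat.cast : ℕ → ℤ) hyce
        push_cast at h0
        rwa [hs11] at h0
      have hycT' : (yc S : ℤ) * (2*(R:ℤ)-1) ≤ 2*(s:ℤ)*((s:ℤ)-1) := by
        have h1 : (yc S) * (2*R-1) ≤ 2*s*(s-1) := le_trans
          (Nat.mul_le_mul_right _ hycT) hTle
        have h0 := (Int.ofNat_le.2 h1)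
        push_cast at h0
        rwa [hR31, hs11] at h0
      have hsZ : (s:ℤ) = 2*(R:ℤ)^2 := by
        have : s = 2*R^2 := hs
        exact_mod_cast congrArg (Nat.cast : ℕ → ℤ) this
      have hRZ : (2:ℤ) ≤ (R:ℤ) := by exact_mod_cast hR2
      exact turan_contra (R:ℤ) (s:ℤ) (eCnt G S : ℤ) (yc S : ℤ) hRZ hsZ htur' hyce' hycT'
    obtain ⟨K, hKsub, hKcard, hKny⟩ := hK
    rcases ramsey_transfer χ hmem K hKcard hKny with ⟨B, hB1, hB2, hB3⟩ | ⟨B, hB1, hB2, hB3⟩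
    · exact Or.inl ⟨B, hB1.trans hKsub, hB2, hB3⟩
    · exact Or.inr ⟨B, hB1.trans hKsub, hB2, hB3⟩
  -- split good sets into those with a blue k-set and those with a red l-set
  set goodb := good.filter (fun S =>
    ∃ B, B ⊆ S ∧ B.card = k ∧ ∀ a ∈ B, ∀ b ∈ B, a ≠ b → χ s(a,b) = 1) with hgoodb
  set goodr := good.filter (fun S =>
    ∃ B, B ⊆ S ∧ B.card = l ∧ ∀ a ∈ B, ∀ b ∈ B, a ≠ b → χ s(a,b) = 0) with hgoodr
  have hcover : good.card ≤ goodb.card + goodr.card := by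
    calc good.card ≤ (goodb ∪ goodr).card := by
          apply Finset.card_le_card
          intro S hS
          rcases hgoodK S hS with h | h
          · exact Finset.mem_union_left _ (Finset.mem_filter.2 ⟨hS, h⟩)
          · exact Finset.mem_union_right _ (Finset.mem_filter.2 ⟨hS, h⟩)
      _ ≤ goodb.card + goodr.card := Finset.card_union_le _ _
  have hprop : ∀ col : Fin 3, ∀ t : ℕ, ∀ 𝒢 : Finset (Finset (Fin n)),
      𝒢 = good.filter (fun S =>
        ∃ B, B ⊆ S ∧ B.card = t ∧ ∀ a ∈ B, ∀ b ∈ B, a ≠ b → χ s(a,b) = col) →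
      ∀ S ∈ 𝒢, S.card = s ∧ ∃ B, B ⊆ S ∧ B.card = t ∧
        ∀ a ∈ B, ∀ b ∈ B, a ≠ b → χ s(a,b) = col := by
    intro col t 𝒢 h𝒢 S hS
    rw [h𝒢] at hS
    rcases Finset.mem_filter.1 hS with ⟨hSg, hSex⟩
    have hS𝒮 := (Finset.mem_filter.1 hSg).1
    exact ⟨(Finset.mem_powersetCard.1 hS𝒮).2, hSex⟩
  -- conclude in whichever colour is more common
  rcases le_total goodr.card goodb.card with hbr | hbr
  · -- blue branch
    left
    have hlb : n.choose s < 4*R*goodb.card := by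
      calc n.choose s < 2*R*good.card := hkey
        _ ≤ 2*R*(goodb.card + goodr.card) := Nat.mul_le_mul_left _ hcover
        _ ≤ 2*R*(2*goodb.card) := by
            apply Nat.mul_le_mul_left
            omega
        _ = 4*R*goodb.card := by ring
    have hfin := final_branch χ 1 hk hns goodb (hprop 1 k goodb hgoodb) hlb
    -- now convert to the real inequality
    have hcsk : s.choose k ≤ D := by omega
    have hfin2 : n.descFactorial k ≤ 4*R*D*(colorCopies (⊤ : SimpleGraph (Fin k)) χ 1) := by
      calc n.descFactorial k ≤ 4*R*(s.choose k)*(colorCopies (⊤ : SimpleGraph (Fin k)) χ 1) :=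
            hfin
        _ ≤ 4*R*D*(colorCopies (⊤ : SimpleGraph (Fin k)) χ 1) := by
            apply Nat.mul_le_mul_right
            apply Nat.mul_le_mul_left
            exact hcsk
    rw [div_mul_eq_mul_div, one_mul, div_le_iff₀ h4RD]
    calc (n.descFactorial k : ℝ) ≤ ((4*R*D*(colorCopies (⊤ : SimpleGraph (Fin k)) χ 1) : ℕ) : ℝ) := by
          exact_mod_cast hfin2
      _ = (colorCopies (⊤ : SimpleGraph (Fin k)) χ 1 : ℝ) * (4*R*D : ℝ) := by
          push_cast; ring
  · -- red branch
    right
    have hlb : n.choose s < 4*R*goodr.card := by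
      calc n.choose s < 2*R*good.card := hkey
        _ ≤ 2*R*(goodb.card + goodr.card) := Nat.mul_le_mul_left _ hcover
        _ ≤ 2*R*(2*goodr.card) := by
            apply Nat.mul_le_mul_left
            omega
        _ = 4*R*goodr.card := by ring
    have hfin := final_branch χ 0 hl hns goodr (hprop 0 l goodr hgoodr) hlb
    have hcsl : s.choose l ≤ D := by omega
    have hfin2 : n.descFactorial l ≤ 4*R*D*(colorCopies (⊤ : SimpleGraph (Fin l)) χ 0) := by
      calc n.descFactorial l ≤ 4*R*(s.choose l)*(colorCopies (⊤ : SimpleGraph (Fin l)) χ 0) :=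
            hfin
        _ ≤ 4*R*D*(colorCopies (⊤ : SimpleGraph (Fin l)) χ 0) := by
            apply Nat.mul_le_mul_right
            apply Nat.mul_le_mul_left
            exact hcsl
    rw [div_mul_eq_mul_div, one_mul, div_le_iff₀ h4RD]
    calc (n.descFactorial l : ℝ) ≤ ((4*R*D*(colorCopies (⊤ : SimpleGraph (Fin l)) χ 0) : ℕ) : ℝ) := by
          exact_mod_cast hfin2
      _ = (colorCopies (⊤ : SimpleGraph (Fin l)) χ 0 : ℝ) * (4*R*D : ℝ) := by
          push_cast; ring
end

section
/- Let k ≥ 3 be an integer and r = r(k,k). The following statements are equivalent: (i) there exists a 2-coloring of E(K_{r−2}) which extends to two distinct 2-colorings of E(K_{r−1}), neither of which contains a monochromatic K_k; (ii) for every s ≥ 2, there exists a mixed blowup coloring of K_{r−1}[s]; (iii) there exists a mixed blowup coloring of K_{r−1}[2]. -/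
open Filter

/-- The complete multipartite graph `K_m[s]` with `m` parts of size `s`. -/
def blowupGraph (m s : ℕ) : SimpleGraph (Fin m × Fin s) :=
  SimpleGraph.comap Prod.fst (⊤ : SimpleGraph (Fin m))

/-- `Red` (together with its complement inside the blowup) is a mixed blowup coloring of
`K_{r(k,k)-1}[s]`: a 2-coloring of the edges of the blowup with no monochromatic `K_k`
which is not the blowup of a Ramsey coloring of `K_{r(k,k)-1}`. -/
noncomputable def IsMixedBlowup (k s : ℕ)
    (Red : SimpleGraph (Fin (ramsey2 k k - 1) × Fin s)) : Prop :=
  Red ≤ blowupGraph (ramsey2 k k - 1) s ∧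
  Red.CliqueFree k ∧ (blowupGraph (ramsey2 k k - 1) s \ Red).CliqueFree k ∧
  ¬ ∃ G : SimpleGraph (Fin (ramsey2 k k - 1)),
      G.CliqueFree k ∧ Gᶜ.CliqueFree k ∧
      ∀ (i j : Fin (ramsey2 k k - 1)) (a b : Fin s),
        Red.Adj (i, a) (j, b) ↔ (i ≠ j ∧ G.Adj i j)

/-- There is a 2-coloring of `E(K_{r-2})` which extends to two distinct Ramsey colorings
of `E(K_{r-1})` (colorings are encoded by their red graphs). -/
noncomputable def ExtendsInTwoWays (k : ℕ) : Prop :=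
  ∃ G₁ G₂ : SimpleGraph (Fin (ramsey2 k k - 1)), G₁ ≠ G₂ ∧
    G₁.CliqueFree k ∧ G₁ᶜ.CliqueFree k ∧ G₂.CliqueFree k ∧ G₂ᶜ.CliqueFree k ∧
    ∀ i j : Fin (ramsey2 k k - 1),
      i.val < ramsey2 k k - 2 → j.val < ramsey2 k k - 2 → (G₁.Adj i j ↔ G₂.Adj i j)

section AuxProof

/-- Key clique-freeness lemma for mixed blowups. -/
lemma mixCliqueFree {n s k : ℕ} (ℓ : Fin n) (H₁ H₂ : SimpleGraph (Fin n))
    (h1 : H₁.CliqueFree k) (h2 : H₂.CliqueFree k)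
    (hagree : ∀ x y : Fin n, x ≠ ℓ → y ≠ ℓ → (H₁.Adj x y ↔ H₂.Adj x y))
    (Q : SimpleGraph (Fin n × Fin s))
    (hQ : ∀ u v : Fin n × Fin s, Q.Adj u v → u.1 ≠ v.1 ∧
        ((((u.1 = ℓ ∧ u.2.val ≠ 0) ∨ (v.1 = ℓ ∧ v.2.val ≠ 0)) → H₂.Adj u.1 v.1) ∧
        (¬((u.1 = ℓ ∧ u.2.val ≠ 0) ∨ (v.1 = ℓ ∧ v.2.val ≠ 0)) → H₁.Adj u.1 v.1))) :
    Q.CliqueFree k := by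
  intro t ht
  have hfst : ∀ u ∈ t, ∀ v ∈ t, u.1 = v.1 → u = v := by
    intro u hu v hv h
    by_contra hne
    exact (hQ u v (ht.1 hu hv hne)).1 h
  have hcard : (t.image Prod.fst).card = k := by
    rw [Finset.card_image_of_injOn, ht.2]
    intro u hu v hv h
    exact hfst u hu v hv h
  by_cases hw : ∃ w ∈ t, w.1 = ℓ ∧ w.2.val ≠ 0
  · obtain ⟨w, hwt, hwℓ, hw0⟩ := hw
    refine h2 (t.image Prod.fst) ⟨?_, hcard⟩
    intro x hx y hy hxy
    simp only [Finset.coe_image, Set.mem_image, Finset.mem_coe] at hx hy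
    obtain ⟨u, hu, rfl⟩ := hx
    obtain ⟨v, hv, rfl⟩ := hy
    have huv : u ≠ v := fun h => hxy (by rw [h])
    have hadj := hQ u v (ht.1 hu hv huv)
    by_cases hc : (u.1 = ℓ ∧ u.2.val ≠ 0) ∨ (v.1 = ℓ ∧ v.2.val ≠ 0)
    · exact hadj.2.1 hc
    · push_neg at hc
      have hu1 : u.1 ≠ ℓ := by
        intro h
        have huw := hfst u hu w hwt (h.trans hwℓ.symm)
        exact hw0 (by rw [← huw]; exact hc.1 h)
      have hv1 : v.1 ≠ ℓ := by
        intro h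
        have hvw := hfst v hv w hwt (h.trans hwℓ.symm)
        exact hw0 (by rw [← hvw]; exact hc.2 h)
      exact (hagree u.1 v.1 hu1 hv1).mp (hadj.2.2 (by push_neg; exact hc))
  · push_neg at hw
    refine h1 (t.image Prod.fst) ⟨?_, hcard⟩
    intro x hx y hy hxy
    simp only [Finset.coe_image, Set.mem_image, Finset.mem_coe] at hx hy
    obtain ⟨u, hu, rfl⟩ := hx
    obtain ⟨v, hv, rfl⟩ := hy
    have huv : u ≠ v := fun h => hxy (by rw [h])
    have hadj := hQ u v (ht.1 hu hv huv)
    refine hadj.2.2 ?_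
    rintro (⟨h1', h2'⟩ | ⟨h1', h2'⟩)
    · exact h2' (hw u hu h1')
    · exact h2' (hw v hv h1')

end AuxProof
section Fwd

/-- The mixed blowup built from two Ramsey colorings agreeing off `ℓ`. -/
def mixedRed {n : ℕ} (s : ℕ) (ℓ : Fin n) (G₁ G₂ : SimpleGraph (Fin n)) :
    SimpleGraph (Fin n × Fin s) where
  Adj u v := u.1 ≠ v.1 ∧
    ((((u.1 = ℓ ∧ u.2.val ≠ 0) ∨ (v.1 = ℓ ∧ v.2.val ≠ 0)) ∧ G₂.Adj u.1 v.1) ∨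
     (¬((u.1 = ℓ ∧ u.2.val ≠ 0) ∨ (v.1 = ℓ ∧ v.2.val ≠ 0)) ∧ G₁.Adj u.1 v.1))
  symm := by
    constructor
    rintro u v ⟨h, (⟨hc, ha⟩ | ⟨hc, ha⟩)⟩
    · exact ⟨h.symm, Or.inl ⟨hc.symm, ha.symm⟩⟩
    · exact ⟨h.symm, Or.inr ⟨fun hh => hc hh.symm, ha.symm⟩⟩
  loopless := by constructor; rintro u ⟨h, -⟩; exact h rfl

lemma extends_to_mixed (k : ℕ) (h : ExtendsInTwoWays k) (s : ℕ) (hs : 2 ≤ s) :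
    ∃ Red : SimpleGraph (Fin (ramsey2 k k - 1) × Fin s), IsMixedBlowup k s Red := by
  obtain ⟨G₁, G₂, hne, h1, h1c, h2, h2c, hag⟩ := h
  -- find a differing edge
  have hex : ∃ i j : Fin (ramsey2 k k - 1), ¬(G₁.Adj i j ↔ G₂.Adj i j) := by
    by_contra hh
    push_neg at hh
    apply hne
    ext x y
    exact hh x y
  obtain ⟨i₀, j₀, hij₀⟩ := hex
  have hnpos : 0 < ramsey2 k k - 1 := i₀.pos
  set ℓ : Fin (ramsey2 k k - 1) := ⟨ramsey2 k k - 1 - 1, by omega⟩ with hℓ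
  have hval : ∀ x : Fin (ramsey2 k k - 1), x ≠ ℓ ↔ x.val < ramsey2 k k - 2 := by
    intro x
    have hx := x.2
    have heq : ramsey2 k k - 2 = ramsey2 k k - 1 - 1 := by omega
    rw [heq]
    constructor
    · intro h
      have : x.val ≠ ramsey2 k k - 1 - 1 := fun hc => h (Fin.ext hc)
      omega
    · intro h hc
      rw [hc] at h
      exact lt_irrefl _ h
  -- WLOG the differing edge touches ℓ
  have hwlog : ∃ i : Fin (ramsey2 k k - 1), i ≠ ℓ ∧ ¬(G₁.Adj i ℓ ↔ G₂.Adj i ℓ) := by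
    have key : ∀ i j : Fin (ramsey2 k k - 1), ¬(G₁.Adj i j ↔ G₂.Adj i j) → j = ℓ →
        ∃ i : Fin (ramsey2 k k - 1), i ≠ ℓ ∧ ¬(G₁.Adj i ℓ ↔ G₂.Adj i ℓ) := by
      intro i j hij hj
      subst hj
      refine ⟨i, ?_, hij⟩
      intro hc
      subst hc
      simp at hij
    by_cases hj : j₀ = ℓ
    · exact key i₀ j₀ hij₀ hj
    · by_cases hi : i₀ = ℓ
      · refine key j₀ i₀ ?_ hi
        rw [G₁.adj_comm, G₂.adj_comm]; exact hij₀
      · exact absurd ((hval i₀).mp hi) (fun h => hij₀ (hag i₀ j₀ h ((hval j₀).mp hj)))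
  obtain ⟨i, hiℓ, hdiff⟩ := hwlog
  have hagree : ∀ x y : Fin (ramsey2 k k - 1), x ≠ ℓ → y ≠ ℓ → (G₁.Adj x y ↔ G₂.Adj x y) :=
    fun x y hx hy => hag x y ((hval x).mp hx) ((hval y).mp hy)
  refine ⟨mixedRed s ℓ G₁ G₂, ?_, ?_, ?_, ?_⟩
  · -- Red ≤ blowup
    rintro u v ⟨h, -⟩
    simp only [blowupGraph, SimpleGraph.comap_adj, SimpleGraph.top_adj]
    exact h
  · -- Red clique-free
    refine mixCliqueFree ℓ G₁ G₂ h1 h2 hagree _ ?_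
    rintro u v ⟨h, hcases⟩
    refine ⟨h, ?_, ?_⟩ <;> intro hc <;> tauto
  · -- Blue clique-free
    refine mixCliqueFree ℓ G₁ᶜ G₂ᶜ h1c h2c ?_ _ ?_
    · intro x y hx hy
      simp only [SimpleGraph.compl_adj]
      rw [hagree x y hx hy]
    · intro u v huv
      rw [SimpleGraph.sdiff_adj] at huv
      obtain ⟨hb, hnr⟩ := huv
      have h : u.1 ≠ v.1 := by
        simpa [blowupGraph] using hb
      refine ⟨h, ?_, ?_⟩
      · intro hc
        refine ⟨h, fun ha => hnr ⟨h, Or.inl ⟨hc, ha⟩⟩⟩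
      · intro hc
        refine ⟨h, fun ha => hnr ⟨h, Or.inr ⟨hc, ha⟩⟩⟩
  · -- not a blowup
    rintro ⟨G, -, -, hG⟩
    set z : Fin s := ⟨0, by omega⟩ with hz
    set o : Fin s := ⟨1, by omega⟩ with ho
    have e1 := hG i ℓ z z
    have e2 := hG i ℓ z o
    have hc1 : ¬((i = ℓ ∧ (z : Fin s).val ≠ 0) ∨ (ℓ = ℓ ∧ (z : Fin s).val ≠ 0)) := by
      simp [hz]
    have hc2 : (i = ℓ ∧ (z : Fin s).val ≠ 0) ∨ (ℓ = ℓ ∧ (o : Fin s).val ≠ 0) := by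
      right; simp [ho]
    have r1 : (mixedRed s ℓ G₁ G₂).Adj (i, z) (ℓ, z) ↔ G₁.Adj i ℓ := by
      show (i ≠ ℓ ∧ _) ↔ _
      constructor
      · rintro ⟨-, (⟨hc, -⟩ | ⟨-, ha⟩)⟩
        · exact absurd hc hc1
        · exact ha
      · intro ha
        exact ⟨hiℓ, Or.inr ⟨hc1, ha⟩⟩
    have r2 : (mixedRed s ℓ G₁ G₂).Adj (i, z) (ℓ, o) ↔ G₂.Adj i ℓ := by
      show (i ≠ ℓ ∧ _) ↔ _
      constructor
      · rintro ⟨-, (⟨-, ha⟩ | ⟨hc, -⟩)⟩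
        · exact ha
        · exact absurd hc2 hc
      · intro ha
        exact ⟨hiℓ, Or.inl ⟨hc2, ha⟩⟩
    rw [r1] at e1
    rw [r2] at e2
    exact hdiff (e1.trans e2.symm)

end Fwd
section Bwd

lemma mixed_to_extends (k : ℕ) (Red : SimpleGraph (Fin (ramsey2 k k - 1) × Fin 2))
    (h : IsMixedBlowup k 2 Red) : ExtendsInTwoWays k := by
  obtain ⟨hle, hred, hblue, hnb⟩ := h
  -- selection graphs
  let emb : (Fin (ramsey2 k k - 1) → Fin 2) →
      (Fin (ramsey2 k k - 1) ↪ Fin (ramsey2 k k - 1) × Fin 2) :=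
    fun a => ⟨fun i => (i, a i), fun x y hxy => congrArg Prod.fst hxy⟩
  let Ga : (Fin (ramsey2 k k - 1) → Fin 2) → SimpleGraph (Fin (ramsey2 k k - 1)) :=
    fun a => Red.comap (emb a)
  have hGaAdj : ∀ a x y, (Ga a).Adj x y ↔ Red.Adj (x, a x) (y, a y) := fun a x y => Iff.rfl
  have hcf : ∀ a, (Ga a).CliqueFree k :=
    fun a => hred.comap (SimpleGraph.Embedding.comap (emb a) Red).isContained
  have hcfc : ∀ a, (Ga a)ᶜ.CliqueFree k := by
    intro a
    have heq : (Ga a)ᶜ = (blowupGraph (ramsey2 k k - 1) 2 \ Red).comap (emb a) := by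
      ext x y
      simp only [SimpleGraph.compl_adj, SimpleGraph.comap_adj, SimpleGraph.sdiff_adj,
        blowupGraph]
      constructor
      · rintro ⟨hxy, hnr⟩
        exact ⟨hxy, hnr⟩
      · rintro ⟨hxy, hnr⟩
        exact ⟨hxy, hnr⟩
    rw [heq]
    exact hblue.comap (SimpleGraph.Embedding.comap (emb a) _).isContained
  -- locality: Ga a depends on a only through its values
  have hloc : ∀ (a : Fin (ramsey2 k k - 1) → Fin 2) (v) (c) (x y),
      x ≠ v → y ≠ v → ((Ga (Function.update a v c)).Adj x y ↔ (Ga a).Adj x y) := by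
    intro a v c x y hx hy
    rw [hGaAdj, hGaAdj, Function.update_of_ne hx, Function.update_of_ne hy]
  -- extract a selection-dependence
  have h' : ∃ i j a b, ¬(Red.Adj (i, a) (j, b) ↔ (i ≠ j ∧ (Ga fun _ => 0).Adj i j)) := by
    by_contra hh
    push_neg at hh
    exact hnb ⟨Ga fun _ => 0, hcf _, hcfc _, hh⟩
  obtain ⟨i, j, a, b, hiff⟩ := h'
  have hij : i ≠ j := by
    rintro rfl
    apply hiff
    constructor
    · intro hadj
      have := hle hadj
      simp [blowupGraph] at this
    · rintro ⟨hc, -⟩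
      exact absurd rfl hc
  have hkey : ¬(Red.Adj (i, a) (j, b) ↔ Red.Adj (i, 0) (j, 0)) := by
    intro hh
    apply hiff
    rw [hh, hGaAdj]
    exact ⟨fun h => ⟨hij, h⟩, fun h => h.2⟩
  -- hybrids
  set a0 : Fin (ramsey2 k k - 1) → Fin 2 := fun _ => 0 with ha0
  set a1 := Function.update a0 i a with ha1
  set a2 := Function.update a1 j b with ha2
  have ha2i : a2 i = a := by
    rw [ha2, Function.update_of_ne hij, ha1, Function.update_self]
  have ha2j : a2 j = b := by
    rw [ha2, Function.update_self]
  have hne02 : Ga a0 ≠ Ga a2 := by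
    intro hh
    apply hkey
    have := hGaAdj a2 i j
    rw [ha2i, ha2j] at this
    rw [← this, ← hh]
    exact hGaAdj a0 i j
  -- in both hybrid steps the two selections differ in one coordinate
  have main : ∀ (q : Fin (ramsey2 k k - 1) → Fin 2) (v) (c),
      Ga (Function.update q v c) ≠ Ga q → ExtendsInTwoWays k := by
    intro q v c hneq
    have hnpos : 0 < ramsey2 k k - 1 := v.pos
    set ℓ : Fin (ramsey2 k k - 1) := ⟨ramsey2 k k - 1 - 1, by omega⟩ with hℓ
    set σ : Equiv.Perm (Fin (ramsey2 k k - 1)) := Equiv.swap v ℓ with hσ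
    have hσℓ : σ ℓ = v := Equiv.swap_apply_right v ℓ
    have hσne : ∀ x : Fin (ramsey2 k k - 1), x ≠ ℓ → σ x ≠ v := by
      intro x hx hc
      exact hx (σ.injective (hc.trans hσℓ.symm))
    have hvalne : ∀ x : Fin (ramsey2 k k - 1), x.val < ramsey2 k k - 2 → x ≠ ℓ := by
      intro x hx hc
      have : x.val = ramsey2 k k - 1 - 1 := by rw [hc]
      omega
    refine ⟨(Ga (Function.update q v c)).comap σ, (Ga q).comap σ, ?_, ?_, ?_, ?_, ?_, ?_⟩
    · intro hh
      apply hneq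
      ext x y
      have := SimpleGraph.ext_iff.mp hh
      have h2 := congrFun (congrFun this (σ x)) (σ y)
      simpa [hσ, Equiv.swap_apply_self] using h2
    · exact (hcf _).comap (SimpleGraph.Embedding.comap σ.toEmbedding _).isContained
    · rw [show ((Ga (Function.update q v c)).comap σ)ᶜ = (Ga (Function.update q v c))ᶜ.comap σ by
        ext x y; simp [σ.injective.ne_iff]]
      exact (hcfc _).comap (SimpleGraph.Embedding.comap σ.toEmbedding _).isContained
    · exact (hcf _).comap (SimpleGraph.Embedding.comap σ.toEmbedding _).isContained
    · rw [show ((Ga q).comap σ)ᶜ = (Ga q)ᶜ.comap σ by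
        ext x y; simp [σ.injective.ne_iff]]
      exact (hcfc _).comap (SimpleGraph.Embedding.comap σ.toEmbedding _).isContained
    · intro x y hx hy
      simp only [SimpleGraph.comap_adj]
      exact hloc q v c (σ x) (σ y) (hσne x (hvalne x hx)) (hσne y (hvalne y hy))
  by_cases hcase : Ga a1 = Ga a0
  · refine main a1 j b ?_
    rw [← ha2, hcase]
    exact fun hh => hne02 (hh.symm)
  · exact main a0 i a (by rw [← ha1]; exact hcase)

end Bwd

theorem statement17 (k : ℕ) (hk : 3 ≤ k) :
    (ExtendsInTwoWays k ↔
      ∀ s : ℕ, 2 ≤ s → ∃ Red : SimpleGraph (Fin (ramsey2 k k - 1) × Fin s),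
        IsMixedBlowup k s Red) ∧
    ((∀ s : ℕ, 2 ≤ s → ∃ Red : SimpleGraph (Fin (ramsey2 k k - 1) × Fin s),
        IsMixedBlowup k s Red) ↔
      ∃ Red : SimpleGraph (Fin (ramsey2 k k - 1) × Fin 2), IsMixedBlowup k 2 Red) := by
  refine ⟨⟨fun h s hs => extends_to_mixed k h s hs, fun h => ?_⟩,
    fun h => h 2 le_rfl, fun h s hs => ?_⟩
  · obtain ⟨Red, hRed⟩ := h 2 le_rfl
    exact mixed_to_extends k Red hRed
  · obtain ⟨Red, hRed⟩ := h
    exact extends_to_mixed k (mixed_to_extends k Red hRed) s hs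
end
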